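/- arXiv:1710.08165 — 3 statements merged into one kernel-verified Lean document; each statement's English description precedes it below -/
import Mathlib

section
/- (Lemma: weighted PSD bound for the John weight-derivative operator) Let x be in the interior of K and let w be a positive vector satisfying the John fixed-point equations at x. Define G = diag(w), Λ = Σ_{x,w} − P_{x,w}^{(2)}, and κ = (1−α)^{-1} = log₂(2m/d). Then for any scalars c₁, c₂ ≥ 0, (c₁ I_m + c₂ Λ (G − αΛ)^{-1}) G (c₁ I_m + c₂ (G − αΛ)^{-1} Λ) ⪯ (c₁ + c₂)² κ² G, where ⪯ denotes the positive-semidefinite order. -/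
open Matrix MeasureTheory Real Set
open scoped ENNReal

noncomputable section

set_option maxHeartbeats 1000000

namespace PolytopeWalks

/-- Slackness `s_{x,i} = b_i − a_i^⊤ x`. -/
def slack {d m : ℕ} (A : Matrix (Fin m) (Fin d) ℝ) (b : Fin m → ℝ) (x : Fin d → ℝ)
    (i : Fin m) : ℝ :=
  b i - A.mulVec x i

/-- The polytope `K = {x : A x ≤ b}`. -/
def poly {d m : ℕ} (A : Matrix (Fin m) (Fin d) ℝ) (b : Fin m → ℝ) : Set (Fin d → ℝ) :=
  {x | ∀ i, A.mulVec x i ≤ b i}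

/-- The interior of the polytope: all slacks positive. -/
def interiorPoly {d m : ℕ} (A : Matrix (Fin m) (Fin d) ℝ) (b : Fin m → ℝ) :
    Set (Fin d → ℝ) :=
  {x | ∀ i, 0 < slack A b x i}

/-- Hessian of the logarithmic barrier, `∇²F_x = Σ_i a_i a_i^⊤ / s_{x,i}²`. -/
def logHess {d m : ℕ} (A : Matrix (Fin m) (Fin d) ℝ) (b : Fin m → ℝ) (x : Fin d → ℝ) :
    Matrix (Fin d) (Fin d) ℝ :=
  ∑ i : Fin m, ((slack A b x i) ^ 2)⁻¹ • vecMulVec (A i) (A i)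

/-- Leverage scores `σ_{x,i} = a_i^⊤ (∇²F_x)⁻¹ a_i / s_{x,i}²`. -/
def lev {d m : ℕ} (A : Matrix (Fin m) (Fin d) ℝ) (b : Fin m → ℝ) (x : Fin d → ℝ)
    (i : Fin m) : ℝ :=
  (A i) ⬝ᵥ ((logHess A b x)⁻¹ *ᵥ (A i)) / (slack A b x i) ^ 2

/-- The Vaidya matrix `V_x = Σ_i (σ_{x,i} + d/m) a_i a_i^⊤ / s_{x,i}²`. -/
def vaidyaMat {d m : ℕ} (A : Matrix (Fin m) (Fin d) ℝ) (b : Fin m → ℝ) (x : Fin d → ℝ) :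
    Matrix (Fin d) (Fin d) ℝ :=
  ∑ i : Fin m, ((lev A b x i + (d : ℝ) / m) / (slack A b x i) ^ 2) • vecMulVec (A i) (A i)

/-- Vaidya local norm `‖v‖_{V_x} = (v^⊤ V_x v)^{1/2}`. -/
def vNorm {d m : ℕ} (A : Matrix (Fin m) (Fin d) ℝ) (b : Fin m → ℝ) (x v : Fin d → ℝ) : ℝ :=
  Real.sqrt (v ⬝ᵥ (vaidyaMat A b x *ᵥ v))

/-- Vaidya slack sensitivities `θ_{x,i} = a_i^⊤ V_x⁻¹ a_i / s_{x,i}²`. -/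
def thetaV {d m : ℕ} (A : Matrix (Fin m) (Fin d) ℝ) (b : Fin m → ℝ) (x : Fin d → ℝ)
    (i : Fin m) : ℝ :=
  (A i) ⬝ᵥ ((vaidyaMat A b x)⁻¹ *ᵥ (A i)) / (slack A b x i) ^ 2

/-- Rescaled constraint matrix `A_x = S_x⁻¹ A`. -/
def Amat {d m : ℕ} (A : Matrix (Fin m) (Fin d) ℝ) (b : Fin m → ℝ) (x : Fin d → ℝ) :
    Matrix (Fin m) (Fin d) ℝ :=
  Matrix.of fun i j => A i j / slack A b x i

/-- The projection matrix `P_x = A_x (A_x^⊤ A_x)⁻¹ A_x^⊤` onto the column space of `A_x`. -/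
def projMat {d m : ℕ} (A : Matrix (Fin m) (Fin d) ℝ) (b : Fin m → ℝ) (x : Fin d → ℝ) :
    Matrix (Fin m) (Fin m) ℝ :=
  Amat A b x * (logHess A b x)⁻¹ * (Amat A b x)ᵀ

/-- Entrywise (Hadamard) square of a matrix. -/
def hadSq {n : ℕ} (M : Matrix (Fin n) (Fin n) ℝ) : Matrix (Fin n) (Fin n) ℝ :=
  Matrix.of fun i j => (M i j) ^ 2

/-- `κ = log₂(2m/d)`. -/
def kappaJ (d m : ℕ) : ℝ := Real.logb 2 ((2 * m : ℝ) / d)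

/-- `α = 1 − 1/log₂(2m/d)`. -/
def alphaJ (d m : ℕ) : ℝ := 1 - 1 / Real.logb 2 ((2 * m : ℝ) / d)

/-- `β_J = d/(2m)`. -/
def betaJ (d m : ℕ) : ℝ := (d : ℝ) / (2 * m)

/-- The weighted projection matrix
`P_{x,w} = W^{α/2} A_x (A_x^⊤ W^α A_x)⁻¹ A_x^⊤ W^{α/2}`. -/
def johnProj {d m : ℕ} (A : Matrix (Fin m) (Fin d) ℝ) (b : Fin m → ℝ) (x : Fin d → ℝ)
    (w : Fin m → ℝ) : Matrix (Fin m) (Fin m) ℝ :=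
  Matrix.diagonal (fun i => w i ^ (alphaJ d m / 2)) * Amat A b x *
    ((Amat A b x)ᵀ * Matrix.diagonal (fun i => w i ^ alphaJ d m) * Amat A b x)⁻¹ *
    (Amat A b x)ᵀ * Matrix.diagonal (fun i => w i ^ (alphaJ d m / 2))

/-- `w` is a positive solution of the John fixed-point equations
`w_i = (P_{x,w})_{ii} + β_J` at `x`. -/
def IsJohnWeight {d m : ℕ} (A : Matrix (Fin m) (Fin d) ℝ) (b : Fin m → ℝ) (x : Fin d → ℝ)
    (w : Fin m → ℝ) : Prop :=
  (∀ i, 0 < w i) ∧ ∀ i, w i = johnProj A b x w i i + betaJ d m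

/-- The John matrix `J_x = Σ_i w_i a_i a_i^⊤ / s_{x,i}²` built from weights `w`. -/
def johnMat {d m : ℕ} (A : Matrix (Fin m) (Fin d) ℝ) (b : Fin m → ℝ) (x : Fin d → ℝ)
    (w : Fin m → ℝ) : Matrix (Fin d) (Fin d) ℝ :=
  ∑ i : Fin m, (w i / (slack A b x i) ^ 2) • vecMulVec (A i) (A i)

/-- The diagonal matrix `G = diag(w)`. -/
def Gmat {m : ℕ} (w : Fin m → ℝ) : Matrix (Fin m) (Fin m) ℝ := Matrix.diagonal w

/-- `Λ = Σ_{x,w} − P_{x,w}^{(2)}`: diagonal of the weighted projection minus its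
Hadamard square. -/
def lamMat {d m : ℕ} (A : Matrix (Fin m) (Fin d) ℝ) (b : Fin m → ℝ) (x : Fin d → ℝ)
    (w : Fin m → ℝ) : Matrix (Fin m) (Fin m) ℝ :=
  Matrix.diagonal (fun i => johnProj A b x w i i) - hadSq (johnProj A b x w)

/-! ### Auxiliary lemmas -/

section AuxPSD

open scoped MatrixOrder in
/-- Square root of a PSD real matrix (replacement for the removed `PosSemidef.sqrt`). -/
def _root_.Matrix.PosSemidef.sqrt {n : ℕ} {N : Matrix (Fin n) (Fin n) ℝ} (_ : N.PosSemidef) :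
    Matrix (Fin n) (Fin n) ℝ :=
  CFC.sqrt N

open scoped MatrixOrder in
lemma _root_.Matrix.PosSemidef.sqrt_mul_self {n : ℕ} {N : Matrix (Fin n) (Fin n) ℝ}
    (hN : N.PosSemidef) : hN.sqrt * hN.sqrt = N :=
  CFC.sqrt_mul_sqrt_self N hN.nonneg

open scoped MatrixOrder in
lemma _root_.Matrix.PosSemidef.posSemidef_sqrt {n : ℕ} {N : Matrix (Fin n) (Fin n) ℝ}
    (hN : N.PosSemidef) : hN.sqrt.PosSemidef :=
  (CFC.sqrt_nonneg N).posSemidef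

variable {n : ℕ}

private lemma ctr (M : Matrix (Fin n) (Fin n) ℝ) : Mᴴ = Mᵀ :=
  Matrix.conjTranspose_eq_transpose_of_trivial M

private lemma psd_def {M : Matrix (Fin n) (Fin n) ℝ} (h1 : Mᵀ = M)
    (h2 : ∀ x : Fin n → ℝ, 0 ≤ x ⬝ᵥ (M *ᵥ x)) : M.PosSemidef := by
  constructor
  · show Mᴴ = M
    rw [ctr, h1]
  · intro x
    exact (Matrix.PosSemidef.of_dotProduct_mulVec_nonneg (M := M) (by show Mᴴ = M; rw [ctr, h1])
      (fun x => by simpa using h2 x)).2 x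

private lemma psd_quad {M : Matrix (Fin n) (Fin n) ℝ} (hM : M.PosSemidef)
    (x : Fin n → ℝ) : 0 ≤ x ⬝ᵥ (M *ᵥ x) := by
  simpa using hM.dotProduct_mulVec_nonneg x

private lemma sym_of_psd {M : Matrix (Fin n) (Fin n) ℝ} (hM : M.PosSemidef) : Mᵀ = M :=
  (ctr M).symm.trans hM.1

private lemma posdef_def {M : Matrix (Fin n) (Fin n) ℝ} (h1 : Mᵀ = M)
    (h2 : ∀ x : Fin n → ℝ, x ≠ 0 → 0 < x ⬝ᵥ (M *ᵥ x)) : M.PosDef := by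
  constructor
  · show Mᴴ = M
    rw [ctr, h1]
  · intro x hx
    exact (Matrix.PosDef.of_dotProduct_mulVec_pos (M := M) (by show Mᴴ = M; rw [ctr, h1])
      (fun x hx => by simpa using h2 x hx)).2 hx

private lemma posdef_quad {M : Matrix (Fin n) (Fin n) ℝ} (hM : M.PosDef)
    {x : Fin n → ℝ} (hx : x ≠ 0) : 0 < x ⬝ᵥ (M *ᵥ x) := by
  simpa using hM.dotProduct_mulVec_pos hx

private lemma sym_of_posdef {M : Matrix (Fin n) (Fin n) ℝ} (hM : M.PosDef) : Mᵀ = M :=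
  (ctr M).symm.trans hM.1

private lemma psd_smul {c : ℝ} {M : Matrix (Fin n) (Fin n) ℝ} (hc : 0 ≤ c)
    (hM : M.PosSemidef) : (c • M).PosSemidef := by
  refine psd_def ?_ fun x => ?_
  · rw [Matrix.transpose_smul, sym_of_psd hM]
  · rw [Matrix.smul_mulVec, dotProduct_smul, smul_eq_mul]
    exact mul_nonneg hc (psd_quad hM x)

private lemma posdef_smul {c : ℝ} {M : Matrix (Fin n) (Fin n) ℝ} (hc : 0 < c)
    (hM : M.PosDef) : (c • M).PosDef := by
  refine posdef_def ?_ fun x hx => ?_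
  · rw [Matrix.transpose_smul, sym_of_posdef hM]
  · rw [Matrix.smul_mulVec, dotProduct_smul, smul_eq_mul]
    exact mul_pos hc (posdef_quad hM hx)

private lemma commute_nonsing_inv {A B : Matrix (Fin n) (Fin n) ℝ} (h : IsUnit A.det)
    (hc : A * B = B * A) : A⁻¹ * B = B * A⁻¹ := by
  calc A⁻¹ * B = A⁻¹ * B * (A * A⁻¹) := by rw [Matrix.mul_nonsing_inv _ h, Matrix.mul_one]
    _ = A⁻¹ * (B * A) * A⁻¹ := by simp only [Matrix.mul_assoc]
    _ = A⁻¹ * (A * B) * A⁻¹ := by rw [hc]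
    _ = (A⁻¹ * A) * B * A⁻¹ := by simp only [Matrix.mul_assoc]
    _ = B * A⁻¹ := by rw [Matrix.nonsing_inv_mul _ h, Matrix.one_mul]

/-- If `A` is positive definite and `A ⪰ c•1` with `c > 0`, then `A⁻¹ ⪯ c⁻¹•1`. -/
private lemma inv_le_smul_one {A : Matrix (Fin n) (Fin n) ℝ} {c : ℝ} (hc : 0 < c)
    (hA : A.PosDef) (h : (A - c • 1).PosSemidef) :
    ((c⁻¹ • 1 : Matrix (Fin n) (Fin n) ℝ) - A⁻¹).PosSemidef := by
  have hAd : IsUnit A.det := isUnit_iff_ne_zero.mpr hA.det_pos.ne'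
  set B := A - c • (1 : Matrix (Fin n) (Fin n) ℝ) with hB
  have hBsym : Bᵀ = B := sym_of_psd h
  have hBB : (B * B).PosSemidef := by
    have := Matrix.posSemidef_self_mul_conjTranspose B
    rwa [ctr, hBsym] at this
  have key : (B * B + c • B).PosSemidef := hBB.add (psd_smul hc.le h)
  have hconj : (A⁻¹ * (B * B + c • B) * A⁻¹).PosSemidef := by
    have h2 := key.mul_mul_conjTranspose_same A⁻¹
    rwa [hA.inv.1] at h2
  have e1 : B * B + c • B = A * A - c • A := by
    rw [hB]
    simp only [Matrix.sub_mul, Matrix.mul_sub, Matrix.smul_mul, Matrix.mul_smul,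
      Matrix.one_mul, Matrix.mul_one, smul_sub, smul_smul]
    abel
  have e2 : A⁻¹ * (A * A - c • A) * A⁻¹ = c • (c⁻¹ • 1 - A⁻¹) := by
    have h3 : A⁻¹ * (A * A - c • A) = A - c • 1 := by
      rw [Matrix.mul_sub, ← Matrix.mul_assoc, Matrix.nonsing_inv_mul _ hAd, Matrix.one_mul,
        Matrix.mul_smul, Matrix.nonsing_inv_mul _ hAd]
    rw [h3, Matrix.sub_mul, Matrix.mul_nonsing_inv _ hAd, Matrix.smul_mul, smul_sub,
      smul_smul, mul_inv_cancel₀ hc.ne', one_smul, Matrix.one_mul]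
  have e3 : c⁻¹ • (A⁻¹ * (B * B + c • B) * A⁻¹) = c⁻¹ • 1 - A⁻¹ := by
    rw [e1, e2, smul_smul, inv_mul_cancel₀ hc.ne', one_smul]
  rw [← e3]
  exact psd_smul (inv_nonneg.mpr hc.le) hconj

/-- If `N` is PSD and `N ⪯ t•1` with `t ≥ 0`, then `N*N ⪯ t²•1`. -/
private lemma sq_psd_bound {N : Matrix (Fin n) (Fin n) ℝ} {t : ℝ} (ht : 0 ≤ t)
    (hN : N.PosSemidef) (h : (t • 1 - N).PosSemidef) :
    ((t ^ 2) • (1 : Matrix (Fin n) (Fin n) ℝ) - N * N).PosSemidef := by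
  have hTT : hN.sqrt * hN.sqrt = N := hN.sqrt_mul_self
  have hTH : hN.sqrtᴴ = hN.sqrt := hN.posSemidef_sqrt.1
  have k1 : (hN.sqrt * (t • 1 - N) * hN.sqrt).PosSemidef := by
    have := h.mul_mul_conjTranspose_same hN.sqrt
    rwa [hTH] at this
  have e : hN.sqrt * (t • 1 - N) * hN.sqrt = t • N - N * N := by
    rw [Matrix.mul_sub, Matrix.sub_mul, Matrix.mul_smul, Matrix.mul_one, Matrix.smul_mul, hTT]
    congr 1
    calc hN.sqrt * N * hN.sqrt = hN.sqrt * (hN.sqrt * hN.sqrt) * hN.sqrt := by rw [hTT]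
      _ = (hN.sqrt * hN.sqrt) * (hN.sqrt * hN.sqrt) := by simp only [Matrix.mul_assoc]
      _ = N * N := by rw [hTT]
  have k2 : (t • (t • 1 - N)).PosSemidef := psd_smul ht h
  have e2 : t • (t • (1 : Matrix (Fin n) (Fin n) ℝ) - N) + (t • N - N * N)
      = (t ^ 2) • 1 - N * N := by
    rw [smul_sub, smul_smul, ← sq]
    abel
  rw [← e2]
  exact k2.add (e ▸ k1)

/-- The abstract core inequality: if `0 ⪯ M ⪯ 1`, `0 ≤ α < 1`, `1 - α = κ⁻¹`, `1 ≤ κ`,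
then `(c₁•1 + c₂•(M R)) (c₁•1 + c₂•(R M)) ⪯ (c₁+c₂)²κ²•1` where `R = (1 - α•M)⁻¹`. -/
private lemma core_bound {M : Matrix (Fin n) (Fin n) ℝ} (hM : M.PosSemidef)
    (hM1 : ((1 : Matrix (Fin n) (Fin n) ℝ) - M).PosSemidef)
    {α κ c₁ c₂ : ℝ} (hα0 : 0 ≤ α) (hκ1 : 1 ≤ κ) (hκα : 1 - α = κ⁻¹)
    (hc₁ : 0 ≤ c₁) (hc₂ : 0 ≤ c₂) :
    (((c₁ + c₂) ^ 2 * κ ^ 2) • (1 : Matrix (Fin n) (Fin n) ℝ) -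
      (c₁ • 1 + c₂ • (M * ((1 : Matrix (Fin n) (Fin n) ℝ) - α • M)⁻¹)) *
      (c₁ • 1 + c₂ • (((1 : Matrix (Fin n) (Fin n) ℝ) - α • M)⁻¹ * M))).PosSemidef := by
  have hκ0 : (0 : ℝ) < κ := lt_of_lt_of_le one_pos hκ1
  have hα1 : α < 1 := by
    have h1 : (0 : ℝ) < κ⁻¹ := inv_pos.mpr hκ0
    linarith
  set F := (1 : Matrix (Fin n) (Fin n) ℝ) - α • M with hFdef
  have hF : F.PosDef := by
    have h1 : ((1 - α) • (1 : Matrix (Fin n) (Fin n) ℝ)).PosDef :=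
      posdef_smul (by linarith) Matrix.PosDef.one
    have h2 : (α • ((1 : Matrix (Fin n) (Fin n) ℝ) - M)).PosSemidef := psd_smul hα0 hM1
    have e : F = (1 - α) • (1 : Matrix (Fin n) (Fin n) ℝ) + α • (1 - M) := by
      rw [hFdef, sub_smul, one_smul, smul_sub]
      abel
    exact e ▸ h1.add_posSemidef h2
  have hFd : IsUnit F.det := isUnit_iff_ne_zero.mpr hF.det_pos.ne'
  have hcomm : F * M = M * F := by
    rw [hFdef]
    simp only [Matrix.sub_mul, Matrix.mul_sub, Matrix.smul_mul, Matrix.mul_smul,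
      Matrix.one_mul, Matrix.mul_one]
  have hRM : F⁻¹ * M = M * F⁻¹ := commute_nonsing_inv hFd hcomm
  have hR : F⁻¹.PosDef := hF.inv
  have hMsym : Mᵀ = M := sym_of_psd hM
  set T := hM.sqrt with hTdef
  have hTT : T * T = M := hM.sqrt_mul_self
  have hTH : Tᴴ = T := hM.posSemidef_sqrt.1
  have hTM : T * M = M * T := by
    rw [← hTT]
    simp only [Matrix.mul_assoc]
  have hTF : F * T = T * F := by
    rw [hFdef]
    simp only [Matrix.sub_mul, Matrix.mul_sub, Matrix.smul_mul, Matrix.mul_smul,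
      Matrix.one_mul, Matrix.mul_one, hTM]
  have hTR : F⁻¹ * T = T * F⁻¹ := commute_nonsing_inv hFd hTF
  have hTRT : T * F⁻¹ * T = M * F⁻¹ := by
    calc T * F⁻¹ * T = T * (F⁻¹ * T) := by rw [Matrix.mul_assoc]
      _ = T * (T * F⁻¹) := by rw [hTR]
      _ = (T * T) * F⁻¹ := by rw [Matrix.mul_assoc]
      _ = M * F⁻¹ := by rw [hTT]
  have hMR_psd : (M * F⁻¹).PosSemidef := by
    have h2 := hR.posSemidef.mul_mul_conjTranspose_same T
    rwa [hTH, hTRT] at h2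
  have hNpsd : (c₁ • (1 : Matrix (Fin n) (Fin n) ℝ) + c₂ • (M * F⁻¹)).PosSemidef :=
    (psd_smul hc₁ Matrix.PosSemidef.one).add (psd_smul hc₂ hMR_psd)
  -- `F⁻¹ ⪯ κ • 1`
  have hRineq : ((κ • 1 : Matrix (Fin n) (Fin n) ℝ) - F⁻¹).PosSemidef := by
    have h1 : (F - κ⁻¹ • (1 : Matrix (Fin n) (Fin n) ℝ)).PosSemidef := by
      have e : F - κ⁻¹ • (1 : Matrix (Fin n) (Fin n) ℝ) = α • (1 - M) := by
        rw [← hκα, hFdef, sub_smul, one_smul, smul_sub]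
        abel
      exact e ▸ psd_smul hα0 hM1
    have h2 := inv_le_smul_one (inv_pos.mpr hκ0) hF h1
    rwa [inv_inv] at h2
  -- `M * F⁻¹ ⪯ κ • 1`
  have hMRineq : ((κ • 1 : Matrix (Fin n) (Fin n) ℝ) - M * F⁻¹).PosSemidef := by
    have k1 : (T * ((κ • 1 : Matrix (Fin n) (Fin n) ℝ) - F⁻¹) * T).PosSemidef := by
      have := hRineq.mul_mul_conjTranspose_same T
      rwa [hTH] at this
    have e1 : T * ((κ • 1 : Matrix (Fin n) (Fin n) ℝ) - F⁻¹) * T = κ • M - M * F⁻¹ := by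
      rw [Matrix.mul_sub, Matrix.sub_mul, Matrix.mul_smul, Matrix.mul_one, Matrix.smul_mul,
        hTT, hTRT]
    have k2 : (κ • ((1 : Matrix (Fin n) (Fin n) ℝ) - M)).PosSemidef :=
      psd_smul hκ0.le hM1
    have e2 : κ • ((1 : Matrix (Fin n) (Fin n) ℝ) - M) + (κ • M - M * F⁻¹)
        = κ • 1 - M * F⁻¹ := by
      rw [smul_sub]
      abel
    rw [← e2]
    exact k2.add (e1 ▸ k1)
  -- bound on `N`
  have hNbound : ((((c₁ + c₂) * κ) • 1 : Matrix (Fin n) (Fin n) ℝ) -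
      (c₁ • 1 + c₂ • (M * F⁻¹))).PosSemidef := by
    have e : (((c₁ + c₂) * κ) • 1 : Matrix (Fin n) (Fin n) ℝ) - (c₁ • 1 + c₂ • (M * F⁻¹))
        = (c₁ * (κ - 1)) • (1 : Matrix (Fin n) (Fin n) ℝ)
          + c₂ • ((κ • 1 : Matrix (Fin n) (Fin n) ℝ) - M * F⁻¹) := by
      module
    rw [e]
    exact (psd_smul (mul_nonneg hc₁ (by linarith)) Matrix.PosSemidef.one).add
      (psd_smul hc₂ hMRineq)
  have main := sq_psd_bound (mul_nonneg (add_nonneg hc₁ hc₂) hκ0.le) hNpsd hNbound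
  have eRM : (c₁ • (1 : Matrix (Fin n) (Fin n) ℝ) + c₂ • (F⁻¹ * M))
      = c₁ • 1 + c₂ • (M * F⁻¹) := by rw [hRM]
  rw [eRM, ← mul_pow]
  exact main

end AuxPSD

section JohnFacts

variable {d m : ℕ} {A : Matrix (Fin m) (Fin d) ℝ} {b : Fin m → ℝ} {x : Fin d → ℝ}
  {w : Fin m → ℝ}

/-- PSD of `diag(P_ii) - P∘P` for a symmetric matrix with `P_ii = ∑_j P_ij²`. -/
private lemma lam_psd_gen {P : Matrix (Fin m) (Fin m) ℝ} (hsym : ∀ i j, P j i = P i j)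
    (hdiag : ∀ i, P i i = ∑ j, (P i j) ^ 2) :
    (Matrix.diagonal (fun i => P i i) - hadSq P).PosSemidef := by
  have hhs : (hadSq P)ᵀ = hadSq P := by
    ext i j
    simp only [Matrix.transpose_apply, hadSq, Matrix.of_apply]
    rw [hsym]
  refine psd_def ?_ fun v => ?_
  · rw [Matrix.transpose_sub, Matrix.diagonal_transpose, hhs]
  · have expand : v ⬝ᵥ ((Matrix.diagonal (fun i => P i i) - hadSq P) *ᵥ v)
        = ∑ i, ∑ j, (P i j) ^ 2 * (v i ^ 2 - v i * v j) := by
      rw [Matrix.sub_mulVec, dotProduct_sub]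
      have e1 : v ⬝ᵥ (Matrix.diagonal (fun i => P i i) *ᵥ v) = ∑ i, v i * (P i i * v i) := by
        simp [dotProduct, Matrix.mulVec_diagonal]
      have e2 : v ⬝ᵥ (hadSq P *ᵥ v) = ∑ i, v i * ∑ j, (P i j) ^ 2 * v j := by
        simp [dotProduct, Matrix.mulVec, hadSq]
      rw [e1, e2, ← Finset.sum_sub_distrib]
      refine Finset.sum_congr rfl fun i _ => ?_
      rw [hdiag i, Finset.sum_mul, Finset.mul_sum, Finset.mul_sum, ← Finset.sum_sub_distrib]
      exact Finset.sum_congr rfl fun j _ => by ring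
    rw [expand]
    have swap : (∑ i, ∑ j, (P i j) ^ 2 * (v i ^ 2 - v i * v j))
        = ∑ i, ∑ j, (P i j) ^ 2 * (v j ^ 2 - v i * v j) := by
      rw [Finset.sum_comm]
      refine Finset.sum_congr rfl fun a _ => Finset.sum_congr rfl fun c _ => ?_
      rw [hsym]
      ring
    have key : (∑ i, ∑ j, (P i j) ^ 2 * (v i ^ 2 - v i * v j))
        + (∑ i, ∑ j, (P i j) ^ 2 * (v i ^ 2 - v i * v j))
        = ∑ i, ∑ j, (P i j * (v i - v j)) ^ 2 := by
      nth_rewrite 2 [swap]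
      rw [← Finset.sum_add_distrib]
      refine Finset.sum_congr rfl fun i _ => ?_
      rw [← Finset.sum_add_distrib]
      exact Finset.sum_congr rfl fun j _ => by ring
    have nn : (0 : ℝ) ≤ ∑ i, ∑ j, (P i j * (v i - v j)) ^ 2 :=
      Finset.sum_nonneg fun i _ => Finset.sum_nonneg fun j _ => sq_nonneg _
    linarith

/-- PSD of the Hadamard square of a symmetric idempotent matrix. -/
private lemma hadSq_psd_gen {P : Matrix (Fin m) (Fin m) ℝ} (hsym : ∀ i j, P j i = P i j)
    (hPP : P * P = P) : (hadSq P).PosSemidef := by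
  have hPsymM : Pᵀ = P := by
    ext i j
    rw [Matrix.transpose_apply]
    exact hsym i j
  have hpsd : P.PosSemidef := by
    have h1 := Matrix.posSemidef_self_mul_conjTranspose P
    rw [ctr, hPsymM, hPP] at h1
    exact h1
  have hentry : ∀ i j, P i j = ∑ k, P i k * P k j := by
    intro i j
    conv_lhs => rw [← hPP]
    rw [Matrix.mul_apply]
  refine psd_def ?_ fun v => ?_
  · ext i j
    rw [Matrix.transpose_apply]
    simp only [hadSq, Matrix.of_apply]
    rw [hsym]
  · have lhs1 : v ⬝ᵥ (hadSq P *ᵥ v) = ∑ i, ∑ j, (P i j) ^ 2 * (v i * v j) := by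
      simp only [dotProduct, Matrix.mulVec, hadSq, Matrix.of_apply, Finset.mul_sum]
      exact Finset.sum_congr rfl fun i _ => Finset.sum_congr rfl fun j _ => by ring
    have rhs1 : ∀ k, (fun i => v i * P i k) ⬝ᵥ (P *ᵥ (fun i => v i * P i k))
        = ∑ i, ∑ j, (v i * P i k) * (P i j * (v j * P j k)) := by
      intro k
      simp only [dotProduct, Matrix.mulVec, Finset.mul_sum]
    have expand : v ⬝ᵥ (hadSq P *ᵥ v)
        = ∑ k, (fun i => v i * P i k) ⬝ᵥ (P *ᵥ (fun i => v i * P i k)) := by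
      rw [lhs1]
      calc ∑ i, ∑ j, (P i j) ^ 2 * (v i * v j)
          = ∑ i, ∑ j, ∑ k, (v i * P i k) * (P i j * (v j * P j k)) := by
            refine Finset.sum_congr rfl fun i _ => Finset.sum_congr rfl fun j _ => ?_
            have hij : P i j = ∑ k, P i k * P j k := by
              rw [hentry i j]
              refine Finset.sum_congr rfl fun k _ => ?_
              rw [hsym k j]
            calc (P i j) ^ 2 * (v i * v j)
                = P i j * (v i * v j) * (∑ k, P i k * P j k) := by rw [← hij]; ring
              _ = ∑ k, (v i * P i k) * (P i j * (v j * P j k)) := by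
                  rw [Finset.mul_sum]
                  exact Finset.sum_congr rfl fun k _ => by ring
        _ = ∑ i, ∑ k, ∑ j, (v i * P i k) * (P i j * (v j * P j k)) :=
            Finset.sum_congr rfl fun i _ => Finset.sum_comm
        _ = ∑ k, ∑ i, ∑ j, (v i * P i k) * (P i j * (v j * P j k)) := Finset.sum_comm
        _ = ∑ k, (fun i => v i * P i k) ⬝ᵥ (P *ᵥ (fun i => v i * P i k)) :=
            Finset.sum_congr rfl fun k _ => (rhs1 k).symm
    rw [expand]
    exact Finset.sum_nonneg fun k _ => psd_quad hpsd _

/-- The matrix `A_x^⊤ W^γ A_x` is positive definite. -/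
private lemma Hmat_posdef (hrank : A.rank = d) (hs : ∀ i, 0 < slack A b x i)
    (hwpos : ∀ i, 0 < w i) (γ : ℝ) :
    ((Amat A b x)ᵀ * Matrix.diagonal (fun i => w i ^ γ) * Amat A b x).PosDef := by
  have hinj : Function.Injective (Matrix.mulVec A) := by
    have hker : LinearMap.ker (Matrix.mulVecLin A) = ⊥ := by
      have h2 := LinearMap.finrank_range_add_finrank_ker (Matrix.mulVecLin A)
      have h3 : Module.finrank ℝ (LinearMap.range (Matrix.mulVecLin A)) = d := hrank
      have h4 : Module.finrank ℝ (Fin d → ℝ) = d := Module.finrank_fin_fun ℝ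
      rw [h3, h4] at h2
      have h5 : Module.finrank ℝ (LinearMap.ker (Matrix.mulVecLin A)) = 0 := by omega
      exact Submodule.finrank_eq_zero.mp h5
    intro u v huv
    refine LinearMap.ker_eq_bot.mp hker ?_
    simpa [Matrix.mulVecLin_apply] using huv
  refine posdef_def ?_ fun u hu => ?_
  · simp only [Matrix.transpose_mul, Matrix.diagonal_transpose, Matrix.transpose_transpose,
      Matrix.mul_assoc]
  · have hquad : u ⬝ᵥ (((Amat A b x)ᵀ * Matrix.diagonal (fun i => w i ^ γ) * Amat A b x) *ᵥ u)
        = ∑ i, w i ^ γ * (Matrix.mulVec (Amat A b x) u i * Matrix.mulVec (Amat A b x) u i) := by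
      rw [← Matrix.mulVec_mulVec, ← Matrix.mulVec_mulVec, dotProduct_mulVec,
        Matrix.vecMul_transpose]
      simp only [dotProduct, Matrix.mulVec_diagonal]
      exact Finset.sum_congr rfl fun i _ => by ring
    have hAu : Matrix.mulVec A u ≠ 0 := fun h0 => hu (hinj (by rw [h0, Matrix.mulVec_zero]))
    obtain ⟨i, hi⟩ : ∃ i, Matrix.mulVec A u i ≠ 0 := by
      by_contra hcon
      push_neg at hcon
      exact hAu (funext hcon)
    have hyi : ∀ k, Matrix.mulVec (Amat A b x) u k
        = (slack A b x k)⁻¹ * Matrix.mulVec A u k := by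
      intro k
      simp only [Matrix.mulVec, dotProduct, Amat, Matrix.of_apply, Finset.mul_sum]
      exact Finset.sum_congr rfl fun j _ => by rw [div_eq_inv_mul, mul_assoc]
    have hyine : Matrix.mulVec (Amat A b x) u i ≠ 0 := by
      rw [hyi i]
      exact mul_ne_zero (inv_ne_zero (hs i).ne') hi
    rw [hquad]
    refine Finset.sum_pos' (fun k _ => mul_nonneg (Real.rpow_pos_of_pos (hwpos k) γ).le
      (mul_self_nonneg _)) ⟨i, Finset.mem_univ i, ?_⟩
    exact mul_pos (Real.rpow_pos_of_pos (hwpos i) γ) (mul_self_pos.mpr hyine)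

/-- Symmetry and idempotence of the weighted projection matrix. -/
private lemma johnProj_facts (hrank : A.rank = d) (hs : ∀ i, 0 < slack A b x i)
    (hwpos : ∀ i, 0 < w i) :
    (∀ i j, johnProj A b x w j i = johnProj A b x w i j) ∧
    johnProj A b x w * johnProj A b x w = johnProj A b x w := by
  set Ax := Amat A b x with hAx
  set D := Matrix.diagonal (fun i => w i ^ (alphaJ d m / 2)) with hD
  set Dα := Matrix.diagonal (fun i => w i ^ alphaJ d m) with hDα
  set H := Axᵀ * Dα * Ax with hH
  have hHpd : H.PosDef := Hmat_posdef hrank hs hwpos (alphaJ d m)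
  have hHd : IsUnit H.det := isUnit_iff_ne_zero.mpr hHpd.det_pos.ne'
  have hHsym : Hᵀ = H := sym_of_posdef hHpd
  have hDD : D * D = Dα := by
    rw [hD, hDα, Matrix.diagonal_mul_diagonal]
    refine congrArg Matrix.diagonal (funext fun i => ?_)
    show w i ^ (alphaJ d m / 2) * w i ^ (alphaJ d m / 2) = w i ^ alphaJ d m
    rw [← Real.rpow_add (hwpos i), add_halves]
  have hPdef : johnProj A b x w = D * Ax * H⁻¹ * Axᵀ * D := rfl
  have hPsym : (johnProj A b x w)ᵀ = johnProj A b x w := by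
    rw [hPdef]
    calc (D * Ax * H⁻¹ * Axᵀ * D)ᵀ = Dᵀ * (Axᵀᵀ * ((H⁻¹)ᵀ * (Axᵀ * Dᵀ))) := by
          simp only [Matrix.transpose_mul, Matrix.mul_assoc]
      _ = D * Ax * H⁻¹ * Axᵀ * D := by
          rw [Matrix.transpose_nonsing_inv, hHsym, Matrix.transpose_transpose, hD,
            Matrix.diagonal_transpose]
          simp only [Matrix.mul_assoc]
  have hDD' : ∀ X : Matrix (Fin m) (Fin m) ℝ, D * (D * X) = Dα * X := fun X => by
    rw [← Matrix.mul_assoc, hDD]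
  have hHX : ∀ X : Matrix (Fin d) (Fin m) ℝ, Axᵀ * (Dα * (Ax * X)) = H * X := fun X => by
    rw [hH]
    simp only [Matrix.mul_assoc]
  have hHH' : ∀ X : Matrix (Fin d) (Fin m) ℝ, H⁻¹ * (H * X) = X := fun X => by
    rw [← Matrix.mul_assoc, Matrix.nonsing_inv_mul _ hHd, Matrix.one_mul]
  have hPP : johnProj A b x w * johnProj A b x w = johnProj A b x w := by
    rw [hPdef]
    calc D * Ax * H⁻¹ * Axᵀ * D * (D * Ax * H⁻¹ * Axᵀ * D)
        = D * (Ax * (H⁻¹ * (Axᵀ * (D * (D * (Ax * (H⁻¹ * (Axᵀ * D)))))))) := by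
          simp only [Matrix.mul_assoc]
      _ = D * (Ax * (H⁻¹ * (Axᵀ * (Dα * (Ax * (H⁻¹ * (Axᵀ * D))))))) := by rw [hDD']
      _ = D * (Ax * (H⁻¹ * (H * (H⁻¹ * (Axᵀ * D))))) := by rw [hHX]
      _ = D * (Ax * (H⁻¹ * (Axᵀ * D))) := by rw [hHH']
      _ = D * Ax * H⁻¹ * Axᵀ * D := by simp only [Matrix.mul_assoc]
  refine ⟨fun i j => ?_, hPP⟩
  calc johnProj A b x w j i = (johnProj A b x w)ᵀ i j := (Matrix.transpose_apply _ i j).symm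
    _ = johnProj A b x w i j := by rw [hPsym]

end JohnFacts

/-- Weighted PSD bound for the John weight-derivative operator: for `c₁, c₂ ≥ 0`,
`(c₁I + c₂Λ(G−αΛ)⁻¹) G (c₁I + c₂(G−αΛ)⁻¹Λ) ⪯ (c₁+c₂)²κ² G`. -/
theorem john_weight_derivative_psd_bound (d m : ℕ) (hd : 0 < d) (hdm : d ≤ m)
    (A : Matrix (Fin m) (Fin d) ℝ) (b : Fin m → ℝ) (hrank : A.rank = d)
    (x : Fin d → ℝ) (hx : x ∈ interiorPoly A b)
    (w : Fin m → ℝ) (hw : IsJohnWeight A b x w)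
    (c₁ c₂ : ℝ) (hc₁ : 0 ≤ c₁) (hc₂ : 0 ≤ c₂) :
    (((c₁ + c₂) ^ 2 * kappaJ d m ^ 2) • Gmat w -
      (c₁ • (1 : Matrix (Fin m) (Fin m) ℝ) +
          c₂ • (lamMat A b x w * (Gmat w - alphaJ d m • lamMat A b x w)⁻¹)) *
        Gmat w *
      (c₁ • (1 : Matrix (Fin m) (Fin m) ℝ) +
          c₂ • ((Gmat w - alphaJ d m • lamMat A b x w)⁻¹ * lamMat A b x w))).PosSemidef := by
  obtain ⟨hwpos, hweq⟩ := hw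
  have hs : ∀ i, 0 < slack A b x i := hx
  obtain ⟨hsym, hPP⟩ := johnProj_facts (A := A) (b := b) (x := x) (w := w) hrank hs hwpos
  have hdiag : ∀ i, johnProj A b x w i i = ∑ j, johnProj A b x w i j ^ 2 := by
    intro i
    conv_lhs => rw [← hPP]
    rw [Matrix.mul_apply]
    exact Finset.sum_congr rfl fun j _ => by rw [hsym i j, pow_two]
  -- scalar facts about κ and α
  have hd0 : (0 : ℝ) < d := Nat.cast_pos.mpr hd
  have hm0 : (0 : ℝ) < m := lt_of_lt_of_le hd0 (Nat.cast_le.mpr hdm)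
  have h2m : (2 : ℝ) ≤ (2 * m : ℝ) / d := by
    rw [le_div_iff₀ hd0]
    have hdm' : (d : ℝ) ≤ m := Nat.cast_le.mpr hdm
    nlinarith
  have hκ1 : 1 ≤ kappaJ d m := by
    have h0 := Real.logb_le_logb_of_le (b := 2) one_lt_two (by norm_num) h2m
    rw [Real.logb_self_eq_one one_lt_two] at h0
    exact h0
  have hκ0 : (0 : ℝ) < kappaJ d m := lt_of_lt_of_le one_pos hκ1
  have hκα : 1 - alphaJ d m = (kappaJ d m)⁻¹ := by
    show 1 - (1 - 1 / Real.logb 2 ((2 * m : ℝ) / d)) = (Real.logb 2 ((2 * m : ℝ) / d))⁻¹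
    ring
  have hκinv1 : (kappaJ d m)⁻¹ ≤ 1 := by
    have h1 : (kappaJ d m)⁻¹ * kappaJ d m = 1 := inv_mul_cancel₀ hκ0.ne'
    have h2 : 0 < (kappaJ d m)⁻¹ := inv_pos.mpr hκ0
    nlinarith
  have hα0 : 0 ≤ alphaJ d m := by linarith
  have hα1 : alphaJ d m < 1 := by
    have h2 : 0 < (kappaJ d m)⁻¹ := inv_pos.mpr hκ0
    linarith
  -- PSD facts about Λ and G
  have hΛpsd : (lamMat A b x w).PosSemidef := lam_psd_gen hsym hdiag
  have hβ : 0 ≤ betaJ d m := by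
    show (0 : ℝ) ≤ (d : ℝ) / (2 * m)
    positivity
  have hGL : (Gmat w - lamMat A b x w).PosSemidef := by
    have e0 : Gmat w - lamMat A b x w
        = (Matrix.diagonal w - Matrix.diagonal (fun i => johnProj A b x w i i))
          + hadSq (johnProj A b x w) := by
      show Matrix.diagonal w - (Matrix.diagonal (fun i => johnProj A b x w i i)
        - hadSq (johnProj A b x w)) = _
      abel
    have e1 : Matrix.diagonal w - Matrix.diagonal (fun i => johnProj A b x w i i)
        = Matrix.diagonal (fun _ => betaJ d m) := by
      rw [Matrix.diagonal_sub]
      refine congrArg Matrix.diagonal (funext fun i => ?_)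
      show w i - johnProj A b x w i i = betaJ d m
      rw [hweq i]
      ring
    rw [e0, e1]
    exact (Matrix.posSemidef_diagonal_iff.mpr fun i => hβ).add (hadSq_psd_gen hsym hPP)
  have hGpd : (Gmat w).PosDef := by
    show (Matrix.diagonal w).PosDef
    exact Matrix.posDef_diagonal_iff.mpr hwpos
  -- square-root diagonal matrices
  set S := Matrix.diagonal (fun i => Real.sqrt (w i)) with hS
  set Si := Matrix.diagonal (fun i => (Real.sqrt (w i))⁻¹) with hSi
  have hsq : ∀ i, Real.sqrt (w i) ≠ 0 := fun i => (Real.sqrt_pos.mpr (hwpos i)).ne'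
  have hSSi : S * Si = 1 := by
    rw [hS, hSi, Matrix.diagonal_mul_diagonal, ← Matrix.diagonal_one]
    exact congrArg Matrix.diagonal (funext fun i => mul_inv_cancel₀ (hsq i))
  have hSiS : Si * S = 1 := by
    rw [hS, hSi, Matrix.diagonal_mul_diagonal, ← Matrix.diagonal_one]
    exact congrArg Matrix.diagonal (funext fun i => inv_mul_cancel₀ (hsq i))
  have hSS : S * S = Gmat w := by
    rw [hS, Matrix.diagonal_mul_diagonal]
    show Matrix.diagonal _ = Matrix.diagonal w
    exact congrArg Matrix.diagonal (funext fun i => Real.mul_self_sqrt (hwpos i).le)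
  have hSH : Sᴴ = S := by rw [ctr, hS, Matrix.diagonal_transpose]
  have hSiH : Siᴴ = Si := by rw [ctr, hSi, Matrix.diagonal_transpose]
  have hSSi' : ∀ X : Matrix (Fin m) (Fin m) ℝ, S * (Si * X) = X := fun X => by
    rw [← Matrix.mul_assoc, hSSi, Matrix.one_mul]
  have hSiS' : ∀ X : Matrix (Fin m) (Fin m) ℝ, Si * (S * X) = X := fun X => by
    rw [← Matrix.mul_assoc, hSiS, Matrix.one_mul]
  have hSGS : Si * Gmat w * Si = 1 := by
    rw [← hSS]
    calc Si * (S * S) * Si = Si * S * (S * Si) := by simp only [Matrix.mul_assoc]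
      _ = 1 := by rw [hSiS, hSSi, Matrix.one_mul]
  -- conjugated matrix M
  set M := Si * lamMat A b x w * Si with hMdef
  have hM : M.PosSemidef := by
    have h0 := hΛpsd.mul_mul_conjTranspose_same Si
    rwa [hSiH] at h0
  have h1M : ((1 : Matrix (Fin m) (Fin m) ℝ) - M).PosSemidef := by
    have h0 := hGL.mul_mul_conjTranspose_same Si
    rw [hSiH] at h0
    have e : Si * (Gmat w - lamMat A b x w) * Si = 1 - M := by
      rw [Matrix.mul_sub, Matrix.sub_mul, hSGS, hMdef]
    rw [← e]
    exact h0
  -- F and its inverse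
  set F := Gmat w - alphaJ d m • lamMat A b x w with hF
  have hFpd : F.PosDef := by
    have e : F = (1 - alphaJ d m) • Gmat w
        + alphaJ d m • (Gmat w - lamMat A b x w) := by
      rw [hF]
      module
    rw [e]
    exact (posdef_smul (by linarith) hGpd).add_posSemidef (psd_smul hα0 hGL)
  have hkey : ((1 : Matrix (Fin m) (Fin m) ℝ) - alphaJ d m • M)⁻¹ = S * (F⁻¹ * S) := by
    have e1 : (1 : Matrix (Fin m) (Fin m) ℝ) - alphaJ d m • M = Si * F * Si := by
      rw [hF, Matrix.mul_sub, Matrix.sub_mul, hSGS, hMdef]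
      congr 1
      rw [Matrix.mul_smul, Matrix.smul_mul]
    rw [e1, Matrix.mul_inv_rev, Matrix.mul_inv_rev, Matrix.inv_eq_right_inv hSiS]
  -- instantiate the core bound
  have hcore := core_bound (α := alphaJ d m) (κ := kappaJ d m) hM h1M hα0 hκ1 hκα hc₁ hc₂
  have hcong := hcore.mul_mul_conjTranspose_same S
  rw [hSH] at hcong
  -- identification of the conjugated expression with the goal
  have key1 : S * (c₁ • (1 : Matrix (Fin m) (Fin m) ℝ)
        + c₂ • (M * ((1 : Matrix (Fin m) (Fin m) ℝ) - alphaJ d m • M)⁻¹))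
      = (c₁ • (1 : Matrix (Fin m) (Fin m) ℝ) + c₂ • (lamMat A b x w * F⁻¹)) * S := by
    rw [hkey, hMdef]
    simp only [Matrix.mul_add, Matrix.add_mul, Matrix.mul_smul, Matrix.smul_mul,
      Matrix.mul_one, Matrix.one_mul]
    congr 2
    calc S * (Si * lamMat A b x w * Si * (S * (F⁻¹ * S)))
        = S * (Si * (lamMat A b x w * (Si * (S * (F⁻¹ * S))))) := by
          simp only [Matrix.mul_assoc]
      _ = lamMat A b x w * (F⁻¹ * S) := by rw [hSSi', hSiS']
      _ = lamMat A b x w * F⁻¹ * S := by rw [Matrix.mul_assoc]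
  have key2 : (c₁ • (1 : Matrix (Fin m) (Fin m) ℝ)
        + c₂ • (((1 : Matrix (Fin m) (Fin m) ℝ) - alphaJ d m • M)⁻¹ * M)) * S
      = S * (c₁ • (1 : Matrix (Fin m) (Fin m) ℝ) + c₂ • (F⁻¹ * lamMat A b x w)) := by
    rw [hkey, hMdef]
    simp only [Matrix.mul_add, Matrix.add_mul, Matrix.mul_smul, Matrix.smul_mul,
      Matrix.mul_one, Matrix.one_mul]
    congr 2
    calc S * (F⁻¹ * S) * (Si * lamMat A b x w * Si) * S
        = S * (F⁻¹ * (S * (Si * (lamMat A b x w * (Si * S))))) := by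
          simp only [Matrix.mul_assoc]
      _ = S * (F⁻¹ * (lamMat A b x w * (Si * S))) := by rw [hSSi']
      _ = S * (F⁻¹ * (lamMat A b x w * 1)) := by rw [hSiS]
      _ = S * (F⁻¹ * lamMat A b x w) := by rw [Matrix.mul_one]
  have final : S * ((((c₁ + c₂) ^ 2 * kappaJ d m ^ 2) • (1 : Matrix (Fin m) (Fin m) ℝ))
        - (c₁ • 1 + c₂ • (M * ((1 : Matrix (Fin m) (Fin m) ℝ) - alphaJ d m • M)⁻¹))
          * (c₁ • 1 + c₂ • (((1 : Matrix (Fin m) (Fin m) ℝ) - alphaJ d m • M)⁻¹ * M))) * S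
      = ((c₁ + c₂) ^ 2 * kappaJ d m ^ 2) • Gmat w
        - (c₁ • (1 : Matrix (Fin m) (Fin m) ℝ) + c₂ • (lamMat A b x w * F⁻¹)) * Gmat w
          * (c₁ • (1 : Matrix (Fin m) (Fin m) ℝ) + c₂ • (F⁻¹ * lamMat A b x w)) := by
    rw [Matrix.mul_sub, Matrix.sub_mul, Matrix.mul_smul, Matrix.mul_one, Matrix.smul_mul, hSS]
    congr 1
    calc S * ((c₁ • (1 : Matrix (Fin m) (Fin m) ℝ)
            + c₂ • (M * ((1 : Matrix (Fin m) (Fin m) ℝ) - alphaJ d m • M)⁻¹))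
          * (c₁ • 1 + c₂ • (((1 : Matrix (Fin m) (Fin m) ℝ) - alphaJ d m • M)⁻¹ * M))) * S
        = (S * (c₁ • (1 : Matrix (Fin m) (Fin m) ℝ)
            + c₂ • (M * ((1 : Matrix (Fin m) (Fin m) ℝ) - alphaJ d m • M)⁻¹)))
          * ((c₁ • 1 + c₂ • (((1 : Matrix (Fin m) (Fin m) ℝ) - alphaJ d m • M)⁻¹ * M)) * S) := by
          simp only [Matrix.mul_assoc]
      _ = ((c₁ • (1 : Matrix (Fin m) (Fin m) ℝ) + c₂ • (lamMat A b x w * F⁻¹)) * S)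
          * (S * (c₁ • (1 : Matrix (Fin m) (Fin m) ℝ) + c₂ • (F⁻¹ * lamMat A b x w))) := by
          rw [key1, key2]
      _ = (c₁ • (1 : Matrix (Fin m) (Fin m) ℝ) + c₂ • (lamMat A b x w * F⁻¹)) * (S * S)
          * (c₁ • (1 : Matrix (Fin m) (Fin m) ℝ) + c₂ • (F⁻¹ * lamMat A b x w)) := by
          simp only [Matrix.mul_assoc]
      _ = (c₁ • (1 : Matrix (Fin m) (Fin m) ℝ) + c₂ • (lamMat A b x w * F⁻¹)) * Gmat w
          * (c₁ • (1 : Matrix (Fin m) (Fin m) ℝ) + c₂ • (F⁻¹ * lamMat A b x w)) := by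
          rw [hSS]
  rw [← final]
  exact hcong

end PolytopeWalks
end
end

section
/- (Lemma: entrywise bounds for M = (G − αΛ)^{-1} G) Let x be in the interior of K and let w be a positive vector satisfying the John fixed-point equations at x. Define G = diag(w), Λ = Σ_{x,w} − P_{x,w}^{(2)}, κ = (1−α)^{-1} = log₂(2m/d), and let M = (G − αΛ)^{-1} G with entries M_{ij}. Then for every i ∈ [m]: (i) M_{ii} ∈ [0, κ]; and (ii) Σ_{j ≠ i} M_{ij}² / w_j ≤ κ³. -/
open Matrix MeasureTheory Real Set
open scoped ENNReal

noncomputable section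

namespace PolytopeWalks

-- AUXILIARY LEMMAS (to be inserted before the theorem)

/-- Swap the outer two and inner two indices of a quadruple sum. -/
private lemma sum4_swap {n : ℕ} (f : Fin n → Fin n → Fin n → Fin n → ℝ) :
    ∑ j, ∑ k, ∑ r, ∑ s, f j k r s = ∑ r, ∑ s, ∑ j, ∑ k, f j k r s := by
  calc ∑ j, ∑ k, ∑ r, ∑ s, f j k r s
      = ∑ j, ∑ r, ∑ k, ∑ s, f j k r s :=
        Finset.sum_congr rfl fun j _ => Finset.sum_comm
    _ = ∑ r, ∑ j, ∑ k, ∑ s, f j k r s := Finset.sum_comm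
    _ = ∑ r, ∑ j, ∑ s, ∑ k, f j k r s :=
        Finset.sum_congr rfl fun r _ => Finset.sum_congr rfl fun j _ => Finset.sum_comm
    _ = ∑ r, ∑ s, ∑ j, ∑ k, f j k r s :=
        Finset.sum_congr rfl fun r _ => Finset.sum_comm

/-- Real conjugate transpose is transpose. -/
private lemma real_conjTranspose {m n : ℕ} (M : Matrix (Fin m) (Fin n) ℝ) : Mᴴ = Mᵀ := by
  ext i j
  simp [Matrix.conjTranspose_apply]

/-- Diagonal entries of a real positive semidefinite matrix are nonnegative. -/
private lemma posSemidef_diag_nonneg {n : ℕ} {M : Matrix (Fin n) (Fin n) ℝ}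
    (hM : M.PosSemidef) (j : Fin n) : 0 ≤ M j j := by
  have h := hM.dotProduct_mulVec_nonneg (Pi.single j 1)
  simpa [dotProduct, Matrix.mulVec_single, Pi.single_apply] using h

/-- Quadratic form of the entrywise square of a real PSD matrix is nonnegative
(Schur product theorem, special case). -/
private lemma hadSq_quadform_nonneg {n : ℕ} {P : Matrix (Fin n) (Fin n) ℝ}
    (hP : P.PosSemidef) (v : Fin n → ℝ) :
    0 ≤ ∑ j, ∑ k, v j * (P j k) ^ 2 * v k := by
  open scoped MatrixOrder in
  obtain ⟨B, hB⟩ := CStarAlgebra.nonneg_iff_eq_star_mul_self.mp hP.nonneg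
  have hPe : ∀ j k, P j k = ∑ r, B r j * B r k := by
    intro j k
    rw [hB]
    simp [Matrix.mul_apply, Matrix.conjTranspose_apply, Matrix.star_eq_conjTranspose]
  have key : ∑ j, ∑ k, v j * (P j k) ^ 2 * v k
      = ∑ r, ∑ s, (∑ j, v j * B r j * B s j) ^ 2 := by
    calc ∑ j, ∑ k, v j * (P j k) ^ 2 * v k
        = ∑ j, ∑ k, ∑ r, ∑ s, (v j * B r j * B s j) * (v k * B r k * B s k) := by
          refine Finset.sum_congr rfl fun j _ => Finset.sum_congr rfl fun k _ => ?_
          rw [hPe j k, sq, Finset.sum_mul_sum]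
          rw [Finset.mul_sum, Finset.sum_mul]
          refine Finset.sum_congr rfl fun r _ => ?_
          rw [Finset.mul_sum, Finset.sum_mul]
          refine Finset.sum_congr rfl fun s _ => ?_
          ring
      _ = ∑ r, ∑ s, ∑ j, ∑ k, (v j * B r j * B s j) * (v k * B r k * B s k) := sum4_swap _
      _ = ∑ r, ∑ s, (∑ j, v j * B r j * B s j) ^ 2 := by
          refine Finset.sum_congr rfl fun r _ => Finset.sum_congr rfl fun s _ => ?_
          rw [sq, Finset.sum_mul_sum]
  rw [key]
  exact Finset.sum_nonneg fun r _ => Finset.sum_nonneg fun s _ => sq_nonneg _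

/-- `johnProj` is positive semidefinite whenever the weights are positive. -/
private lemma johnProj_posSemidef {d m : ℕ} (A : Matrix (Fin m) (Fin d) ℝ) (b : Fin m → ℝ)
    (x : Fin d → ℝ) {w : Fin m → ℝ} (hw : ∀ i, 0 < w i) :
    (johnProj A b x w).PosSemidef := by
  have hD : (Matrix.diagonal fun i => w i ^ alphaJ d m).PosSemidef :=
    Matrix.PosSemidef.diagonal fun i => Real.rpow_nonneg (hw i).le _
  have hB : ((Amat A b x)ᵀ * Matrix.diagonal (fun i => w i ^ alphaJ d m) *
      Amat A b x).PosSemidef := by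
    have h2 := hD.conjTranspose_mul_mul_same (Amat A b x)
    rwa [real_conjTranspose] at h2
  have hV := hB.inv
  have hP := hV.mul_mul_conjTranspose_same
    (Matrix.diagonal (fun i => w i ^ (alphaJ d m / 2)) * Amat A b x)
  have hct : (Matrix.diagonal (fun i => w i ^ (alphaJ d m / 2)) * Amat A b x)ᴴ
      = (Amat A b x)ᵀ * Matrix.diagonal (fun i => w i ^ (alphaJ d m / 2)) := by
    rw [Matrix.conjTranspose_mul, real_conjTranspose, real_conjTranspose,
      Matrix.diagonal_transpose]
  rw [hct] at hP
  have heq : johnProj A b x w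
      = Matrix.diagonal (fun i => w i ^ (alphaJ d m / 2)) * Amat A b x *
        ((Amat A b x)ᵀ * Matrix.diagonal (fun i => w i ^ alphaJ d m) * Amat A b x)⁻¹ *
        ((Amat A b x)ᵀ * Matrix.diagonal (fun i => w i ^ (alphaJ d m / 2))) := by
    unfold johnProj
    simp only [Matrix.mul_assoc]
  rw [heq]
  simpa [Matrix.mul_assoc] using hP

private lemma scalar_sq_div {a ww : ℝ} (hw : ww ≠ 0) : (a * ww) ^ 2 / ww = a ^ 2 * ww := by
  field_simp

private lemma scalar_row0 {a yy dd c : ℝ} (hd : dd ≠ 0) (h : dd * a + c * yy = 0) :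
    a + c * (yy / dd) = 0 := by
  field_simp
  linear_combination h

private lemma scalar_row1 {a yy dd c : ℝ} (hd : dd ≠ 0) (h : dd * a + c * yy = 1) :
    a + c * (yy / dd) = 1 / dd := by
  field_simp
  linear_combination h

private lemma scalar_inv_sq {p dd : ℝ} (hd : dd ≠ 0) :
    (1 / dd) * p ^ 2 * (1 / dd) = p ^ 2 / dd ^ 2 := by
  field_simp

private lemma final_combine {S Zv a k : ℝ} (hk1 : 1 ≤ k) (ha0 : 0 ≤ a) (ha1 : a < 1)
    (hsum : S ≤ a ^ 2 * k * Zv) (hkey : 4 * a * Zv ≤ k ^ 2) : S ≤ k ^ 3 := by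
  have hk0 : (0:ℝ) < k := lt_of_lt_of_le one_pos hk1
  have hk3 : (0:ℝ) ≤ k ^ 3 := pow_nonneg hk0.le 3
  rcases eq_or_lt_of_le ha0 with h0 | hpos
  · have hz : a ^ 2 * k * Zv = 0 := by rw [← h0]; ring
    linarith
  · have h8 : a ^ 2 * k * Zv = (a * k / 4) * (4 * a * Zv) := by ring
    have h9 : (a * k / 4) * (4 * a * Zv) ≤ (a * k / 4) * k ^ 2 :=
      mul_le_mul_of_nonneg_left hkey
        (div_nonneg (mul_nonneg ha0 hk0.le) (by norm_num))
    have h10 : (a * k / 4) * k ^ 2 ≤ k ^ 3 := by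
      nlinarith [mul_nonneg (by linarith : (0:ℝ) ≤ 4 - a) hk3]
    linarith

/-- The main entrywise computation, abstracted from the geometry. -/
private lemma john_M_aux {m : ℕ} (P : Matrix (Fin m) (Fin m) ℝ)
    (hsym : ∀ j k, P j k = P k j)
    (hquad : ∀ v : Fin m → ℝ, 0 ≤ ∑ j, ∑ k, v j * (P j k) ^ 2 * v k)
    (hdiag : ∀ j, 0 ≤ P j j)
    (w : Fin m → ℝ) (hwpos : ∀ j, 0 < w j) (α β κ : ℝ)
    (hκ1 : 1 ≤ κ) (hα : α = 1 - 1 / κ) (hβ : 0 < β)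
    (hfix : ∀ j, w j = P j j + β) :
    (∀ i, ((Matrix.diagonal w - α • (Matrix.diagonal (fun j => P j j) - hadSq P))⁻¹ *
        Matrix.diagonal w) i i ∈ Set.Icc (0 : ℝ) κ) ∧
    (∀ i, ∑ j ∈ Finset.univ.erase i,
        (((Matrix.diagonal w - α • (Matrix.diagonal (fun j => P j j) - hadSq P))⁻¹ *
          Matrix.diagonal w) i j) ^ 2 / w j ≤ κ ^ 3) := by
  have hκ0 : (0 : ℝ) < κ := lt_of_lt_of_le one_pos hκ1
  have hα0 : 0 ≤ α := by
    rw [hα]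
    have h1 : 1 / κ ≤ 1 := by rw [div_le_one hκ0]; exact hκ1
    linarith
  have hα1 : α < 1 := by
    rw [hα]
    have h1 : 0 < 1 / κ := by positivity
    linarith
  have hκα : κ * (1 - α) = 1 := by rw [hα]; field_simp; ring
  set δ : Fin m → ℝ := fun j => (1 - α) * w j + α * β with hδdef
  have hδval : ∀ j, δ j = (1 - α) * w j + α * β := fun j => by rw [hδdef]
  have hδ : ∀ j, 0 < δ j := by
    intro j
    have h1 : 0 < (1 - α) * w j := mul_pos (by linarith) (hwpos j)
    have h2 : 0 ≤ α * β := mul_nonneg hα0 hβ.le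
    rw [hδval j]
    linarith
  have hwκδ : ∀ j, w j ≤ κ * δ j := by
    intro j
    have h1 : κ * δ j = κ * (1 - α) * w j + κ * (α * β) := by rw [hδval j]; ring
    have h2 : 0 ≤ κ * (α * β) := mul_nonneg hκ0.le (mul_nonneg hα0 hβ.le)
    rw [h1, hκα, one_mul]
    linarith
  set F : Matrix (Fin m) (Fin m) ℝ :=
    Matrix.diagonal w - α • (Matrix.diagonal (fun j => P j j) - hadSq P) with hFdef
  have hFe : ∀ j k, F j k = (if j = k then δ j else 0) + α * (P j k) ^ 2 := by
    intro j k
    by_cases hjk : j = k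
    · subst hjk
      have h1 : F j j = w j - α * (P j j - (P j j) ^ 2) := by
        rw [hFdef]
        simp [hadSq, Matrix.sub_apply, Matrix.smul_apply]
      rw [h1, if_pos rfl, hδval j]
      linear_combination α * (hfix j)
    · have h1 : F j k = α * (P j k) ^ 2 := by
        rw [hFdef]
        simp [hadSq, Matrix.sub_apply, Matrix.smul_apply, Matrix.diagonal_apply_ne _ hjk]
      rw [h1, if_neg hjk, zero_add]
  have hFsym : ∀ j k, F j k = F k j := by
    intro j k
    rw [hFe, hFe, hsym j k]
    by_cases hjk : j = k
    · subst hjk; rfl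
    · rw [if_neg hjk, if_neg (Ne.symm hjk)]
  have hFquad : ∀ v : Fin m → ℝ, ∑ j, ∑ k, v j * F j k * v k
      = (∑ j, δ j * v j ^ 2) + α * ∑ j, ∑ k, v j * (P j k) ^ 2 * v k := by
    intro v
    have h1 : ∀ j k, v j * F j k * v k
        = (if j = k then δ j * v j ^ 2 else 0) + α * (v j * (P j k) ^ 2 * v k) := by
      intro j k
      rw [hFe]
      by_cases hjk : j = k
      · subst hjk; rw [if_pos rfl, if_pos rfl]; ring
      · rw [if_neg hjk, if_neg hjk]; ring
    calc ∑ j, ∑ k, v j * F j k * v k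
        = ∑ j, ∑ k, ((if j = k then δ j * v j ^ 2 else 0) + α * (v j * (P j k) ^ 2 * v k)) :=
          Finset.sum_congr rfl fun j _ => Finset.sum_congr rfl fun k _ => h1 j k
      _ = ∑ j, ((∑ k, if j = k then δ j * v j ^ 2 else 0) + α * ∑ k, v j * (P j k) ^ 2 * v k) := by
          refine Finset.sum_congr rfl fun j _ => ?_
          rw [Finset.sum_add_distrib, Finset.mul_sum]
      _ = ∑ j, (δ j * v j ^ 2 + α * ∑ k, v j * (P j k) ^ 2 * v k) := by
          refine Finset.sum_congr rfl fun j _ => ?_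
          rw [Finset.sum_ite_eq Finset.univ j (fun _ => δ j * v j ^ 2),
            if_pos (Finset.mem_univ j)]
      _ = (∑ j, δ j * v j ^ 2) + α * ∑ j, ∑ k, v j * (P j k) ^ 2 * v k := by
          rw [Finset.sum_add_distrib, Finset.mul_sum]
  have hFpos : ∀ v : Fin m → ℝ, (∑ j, δ j * v j ^ 2) ≤ ∑ j, ∑ k, v j * F j k * v k := by
    intro v
    rw [hFquad v]
    have := mul_nonneg hα0 (hquad v)
    linarith
  have hFposdef : F.PosDef := by
    rw [Matrix.posDef_iff_dotProduct_mulVec]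
    constructor
    · ext j k
      rw [Matrix.conjTranspose_apply]
      simp only [star_trivial]
      exact hFsym k j
    · intro v hv
      have hquadv : dotProduct (star v) (F *ᵥ v) = ∑ j, ∑ k, v j * F j k * v k := by
        simp only [dotProduct, Matrix.mulVec, Pi.star_apply, star_trivial, Finset.mul_sum]
        exact Finset.sum_congr rfl fun j _ => Finset.sum_congr rfl fun k _ => by ring
      rw [hquadv]
      obtain ⟨j, hvj⟩ : ∃ j, v j ≠ 0 := Function.ne_iff.mp hv
      have h2 : 0 < v j ^ 2 := lt_of_le_of_ne (sq_nonneg _) (Ne.symm (pow_ne_zero 2 hvj))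
      calc (0 : ℝ) < δ j * v j ^ 2 := mul_pos (hδ j) h2
        _ ≤ ∑ j', δ j' * v j' ^ 2 :=
            Finset.single_le_sum (f := fun j' => δ j' * v j' ^ 2)
              (fun j' _ => mul_nonneg (hδ j').le (sq_nonneg _)) (Finset.mem_univ j)
        _ ≤ ∑ j, ∑ k, v j * F j k * v k := hFpos v
  have hdet : IsUnit F.det := isUnit_iff_ne_zero.mpr hFposdef.det_pos.ne'
  have hMul : F * F⁻¹ = 1 := Matrix.mul_nonsing_inv F hdet
  have hHsym : ∀ j k, F⁻¹ j k = F⁻¹ k j := by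
    have hFt : Fᵀ = F := by
      ext j k
      rw [Matrix.transpose_apply]
      exact hFsym k j
    have h1 : (F⁻¹)ᵀ = F⁻¹ := by rw [Matrix.transpose_nonsing_inv, hFt]
    intro j k
    conv_rhs => rw [← h1]
    rw [Matrix.transpose_apply]
  have hM : ∀ i j, (F⁻¹ * Matrix.diagonal w) i j = F⁻¹ i j * w j := by
    intro i j
    exact Matrix.mul_diagonal _ _ _ _
  have hFh : ∀ i j, (∑ k, F j k * F⁻¹ k i) = if j = i then 1 else 0 := by
    intro i j
    have h1 := congrFun (congrFun hMul j) i
    rw [Matrix.mul_apply] at h1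
    rw [h1, Matrix.one_apply]
  have hrow : ∀ i j, δ j * F⁻¹ j i + α * (∑ k, (P j k) ^ 2 * F⁻¹ k i)
      = if j = i then 1 else 0 := by
    intro i j
    rw [← hFh i j]
    calc δ j * F⁻¹ j i + α * ∑ k, (P j k) ^ 2 * F⁻¹ k i
        = (∑ k, (if j = k then δ j else 0) * F⁻¹ k i)
          + ∑ k, α * ((P j k) ^ 2 * F⁻¹ k i) := by
          rw [← Finset.mul_sum]
          congr 1
          have h2 : ∀ k, (if j = k then δ j else 0) * F⁻¹ k i
              = if j = k then δ j * F⁻¹ k i else 0 := by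
            intro k; by_cases hjk : j = k <;> simp [hjk]
          rw [Finset.sum_congr rfl fun k _ => h2 k,
            Finset.sum_ite_eq Finset.univ j (fun k => δ j * F⁻¹ k i),
            if_pos (Finset.mem_univ j)]
      _ = ∑ k, ((if j = k then δ j else 0) * F⁻¹ k i + α * ((P j k) ^ 2 * F⁻¹ k i)) := by
          rw [Finset.sum_add_distrib]
      _ = ∑ k, F j k * F⁻¹ k i := by
          refine Finset.sum_congr rfl fun k _ => ?_
          rw [hFe j k]
          ring
  have hQi : ∀ i, ∑ j, ∑ k, F⁻¹ j i * F j k * F⁻¹ k i = F⁻¹ i i := by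
    intro i
    calc ∑ j, ∑ k, F⁻¹ j i * F j k * F⁻¹ k i
        = ∑ j, F⁻¹ j i * ∑ k, F j k * F⁻¹ k i := by
          refine Finset.sum_congr rfl fun j _ => ?_
          rw [Finset.mul_sum]
          exact Finset.sum_congr rfl fun k _ => by ring
      _ = ∑ j, F⁻¹ j i * (if j = i then 1 else 0) :=
          Finset.sum_congr rfl fun j _ => by rw [hFh i j]
      _ = F⁻¹ i i := by simp
  have hQlow : ∀ i, (∑ j, δ j * (F⁻¹ j i) ^ 2) ≤ F⁻¹ i i := by
    intro i
    have h1 := hFpos (fun k => F⁻¹ k i)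
    rw [hQi i] at h1
    exact h1
  have hii0 : ∀ i, 0 ≤ F⁻¹ i i := by
    intro i
    refine le_trans ?_ (hQlow i)
    exact Finset.sum_nonneg fun j _ => mul_nonneg (hδ j).le (sq_nonneg _)
  have hδii : ∀ i, δ i * F⁻¹ i i ≤ 1 := by
    intro i
    have h1 : δ i * (F⁻¹ i i) ^ 2 ≤ F⁻¹ i i := by
      refine le_trans ?_ (hQlow i)
      exact Finset.single_le_sum (f := fun j => δ j * (F⁻¹ j i) ^ 2)
        (fun j _ => mul_nonneg (hδ j).le (sq_nonneg _)) (Finset.mem_univ i)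
    rcases lt_or_eq_of_le (hii0 i) with hpos | hzero
    · nlinarith
    · rw [← hzero]; norm_num
  constructor
  · -- part (i)
    intro i
    rw [hM i i, Set.mem_Icc]
    refine ⟨mul_nonneg (hii0 i) (hwpos i).le, ?_⟩
    have h1 : F⁻¹ i i * w i ≤ F⁻¹ i i * (κ * δ i) :=
      mul_le_mul_of_nonneg_left (hwκδ i) (hii0 i)
    have h2 : F⁻¹ i i * (κ * δ i) = κ * (δ i * F⁻¹ i i) := by ring
    have h3 : κ * (δ i * F⁻¹ i i) ≤ κ * 1 := mul_le_mul_of_nonneg_left (hδii i) hκ0.le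
    linarith
  · -- part (ii)
    intro i
    set y : Fin m → ℝ := fun j => ∑ k, (P j k) ^ 2 * F⁻¹ k i with hydef
    have hyval : ∀ j, y j = ∑ k, (P j k) ^ 2 * F⁻¹ k i := fun j => by rw [hydef]
    have hrowne : ∀ j, j ≠ i → δ j * F⁻¹ j i + α * y j = 0 := by
      intro j hj
      have h3 := hrow i j
      rw [if_neg hj] at h3
      rw [hyval j]
      exact h3
    have hrowi : δ i * F⁻¹ i i + α * y i = 1 := by
      have h3 := hrow i i
      rw [if_pos rfl] at h3
      rw [hyval i]
      exact h3
    have hterm : ∀ j, j ≠ i →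
        ((F⁻¹ * Matrix.diagonal w) i j) ^ 2 / w j ≤ α ^ 2 * κ * (y j ^ 2 / δ j) := by
      intro j hj
      have hwj := hwpos j
      have hδj := hδ j
      rw [hM i j, hHsym i j]
      have h1 : (F⁻¹ j i * w j) ^ 2 / w j = (F⁻¹ j i) ^ 2 * w j :=
        scalar_sq_div hwj.ne'
      rw [h1]
      have h2 : F⁻¹ j i = -(α * y j) / δ j := by
        rw [eq_div_iff hδj.ne']
        linear_combination hrowne j hj
      rw [h2]
      have h3 : (-(α * y j) / δ j) ^ 2 * w j = α ^ 2 * y j ^ 2 * w j / δ j ^ 2 := by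
        rw [div_pow, neg_sq, mul_pow, div_mul_eq_mul_div]
      rw [h3, div_le_iff₀ (by positivity : (0:ℝ) < δ j ^ 2)]
      have h4 : α ^ 2 * κ * (y j ^ 2 / δ j) * δ j ^ 2 = (α ^ 2 * y j ^ 2) * (κ * δ j) := by
        field_simp
      rw [h4]
      exact mul_le_mul_of_nonneg_left (hwκδ j) (by positivity)
    set Z : ℝ := ∑ j, y j ^ 2 / δ j with hZdef
    have hZval : Z = ∑ j, y j ^ 2 / δ j := by rw [hZdef]
    have hsum1 : ∑ j ∈ Finset.univ.erase i,
        ((F⁻¹ * Matrix.diagonal w) i j) ^ 2 / w j ≤ α ^ 2 * κ * Z := by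
      calc ∑ j ∈ Finset.univ.erase i, ((F⁻¹ * Matrix.diagonal w) i j) ^ 2 / w j
          ≤ ∑ j ∈ Finset.univ.erase i, α ^ 2 * κ * (y j ^ 2 / δ j) :=
            Finset.sum_le_sum fun j hj => hterm j (Finset.mem_erase.mp hj).1
        _ ≤ ∑ j, α ^ 2 * κ * (y j ^ 2 / δ j) := by
            refine Finset.sum_le_sum_of_subset_of_nonneg (Finset.subset_univ _) ?_
            intro j _ _
            have h7 : (0:ℝ) ≤ y j ^ 2 / δ j := div_nonneg (sq_nonneg _) (hδ j).le
            exact mul_nonneg (mul_nonneg (sq_nonneg α) hκ0.le) h7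
        _ = α ^ 2 * κ * Z := by rw [hZval, Finset.mul_sum]
    have hkey : 4 * α * Z ≤ (P i i) ^ 2 / (δ i) ^ 2 := by
      have hminus := hquad (fun j => F⁻¹ j i - α * (y j / δ j))
      have hA : ∀ j, F⁻¹ j i + α * (y j / δ j) = if j = i then 1 / δ i else 0 := by
        intro j
        have hδj := (hδ j).ne'
        by_cases hj : j = i
        · subst hj
          rw [if_pos rfl]
          exact scalar_row1 hδj hrowi
        · rw [if_neg hj]
          exact scalar_row0 hδj (hrowne j hj)
      have hplus : ∑ j, ∑ k, (F⁻¹ j i + α * (y j / δ j)) * (P j k) ^ 2 *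
          (F⁻¹ k i + α * (y k / δ k)) = (P i i) ^ 2 / (δ i) ^ 2 := by
        calc ∑ j, ∑ k, (F⁻¹ j i + α * (y j / δ j)) * (P j k) ^ 2 *
            (F⁻¹ k i + α * (y k / δ k))
            = ∑ j, ∑ k, (if j = i then 1 / δ i else 0) * (P j k) ^ 2 *
              (if k = i then 1 / δ i else 0) :=
              Finset.sum_congr rfl fun j _ => Finset.sum_congr rfl fun k _ => by
                rw [hA j, hA k]
          _ = ∑ j, (if j = i then 1 / δ i else 0) * (P j i) ^ 2 * (1 / δ i) := by
              refine Finset.sum_congr rfl fun j _ => ?_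
              have h6 : ∀ k, (if j = i then 1 / δ i else 0) * (P j k) ^ 2 *
                  (if k = i then 1 / δ i else 0)
                  = if k = i then (if j = i then 1 / δ i else 0) * (P j k) ^ 2 * (1 / δ i)
                    else 0 := by
                intro k; by_cases hk : k = i <;> simp [hk]
              rw [Finset.sum_congr rfl fun k _ => h6 k]
              rw [Finset.sum_ite_eq' Finset.univ i
                  (fun k => (if j = i then 1 / δ i else 0) * (P j k) ^ 2 * (1 / δ i)),
                if_pos (Finset.mem_univ i)]
          _ = (1 / δ i) * (P i i) ^ 2 * (1 / δ i) := by
              have h7 : ∀ j, (if j = i then 1 / δ i else 0) * (P j i) ^ 2 * (1 / δ i)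
                  = if j = i then (1 / δ i) * (P j i) ^ 2 * (1 / δ i) else 0 := by
                intro j; by_cases hj : j = i <;> simp [hj]
              rw [Finset.sum_congr rfl fun j _ => h7 j]
              rw [Finset.sum_ite_eq' Finset.univ i
                  (fun j => (1 / δ i) * (P j i) ^ 2 * (1 / δ i)),
                if_pos (Finset.mem_univ i)]
          _ = (P i i) ^ 2 / (δ i) ^ 2 := scalar_inv_sq (hδ i).ne'
      have hdiff : (∑ j, ∑ k, (F⁻¹ j i + α * (y j / δ j)) * (P j k) ^ 2 *
            (F⁻¹ k i + α * (y k / δ k)))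
          - (∑ j, ∑ k, (F⁻¹ j i - α * (y j / δ j)) * (P j k) ^ 2 *
            (F⁻¹ k i - α * (y k / δ k)))
          = 4 * α * Z := by
        have hcomb : ∀ j k, (F⁻¹ j i + α * (y j / δ j)) * (P j k) ^ 2 *
              (F⁻¹ k i + α * (y k / δ k))
            - (F⁻¹ j i - α * (y j / δ j)) * (P j k) ^ 2 *
              (F⁻¹ k i - α * (y k / δ k))
            = 2 * ((P j k) ^ 2 * F⁻¹ j i * (α * (y k / δ k)))
              + 2 * ((P j k) ^ 2 * (α * (y j / δ j)) * F⁻¹ k i) := by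
          intro j k; ring
        have e1 : (∑ j, ∑ k, (F⁻¹ j i + α * (y j / δ j)) * (P j k) ^ 2 *
              (F⁻¹ k i + α * (y k / δ k)))
            - (∑ j, ∑ k, (F⁻¹ j i - α * (y j / δ j)) * (P j k) ^ 2 *
              (F⁻¹ k i - α * (y k / δ k)))
            = (∑ j, ∑ k, 2 * ((P j k) ^ 2 * F⁻¹ j i * (α * (y k / δ k))))
              + (∑ j, ∑ k, 2 * ((P j k) ^ 2 * (α * (y j / δ j)) * F⁻¹ k i)) := by
          rw [← Finset.sum_sub_distrib, ← Finset.sum_add_distrib]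
          refine Finset.sum_congr rfl fun j _ => ?_
          rw [← Finset.sum_sub_distrib, ← Finset.sum_add_distrib]
          exact Finset.sum_congr rfl fun k _ => hcomb j k
        have e2 : (∑ j, ∑ k, 2 * ((P j k) ^ 2 * F⁻¹ j i * (α * (y k / δ k))))
            = 2 * α * Z := by
          rw [Finset.sum_comm]
          have e21 : ∀ k, (∑ j, 2 * ((P j k) ^ 2 * F⁻¹ j i * (α * (y k / δ k))))
              = 2 * α * (y k / δ k) * ∑ j, (P k j) ^ 2 * F⁻¹ j i := by
            intro k
            rw [Finset.mul_sum]
            refine Finset.sum_congr rfl fun j _ => ?_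
            rw [hsym j k]
            ring
          rw [Finset.sum_congr rfl fun k _ => e21 k]
          rw [hZval, Finset.mul_sum]
          refine Finset.sum_congr rfl fun k _ => ?_
          rw [← hyval k]
          ring
        have e3 : (∑ j, ∑ k, 2 * ((P j k) ^ 2 * (α * (y j / δ j)) * F⁻¹ k i))
            = 2 * α * Z := by
          have e31 : ∀ j, (∑ k, 2 * ((P j k) ^ 2 * (α * (y j / δ j)) * F⁻¹ k i))
              = 2 * α * (y j / δ j) * ∑ k, (P j k) ^ 2 * F⁻¹ k i := by
            intro j
            rw [Finset.mul_sum]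
            refine Finset.sum_congr rfl fun k _ => ?_
            ring
          rw [Finset.sum_congr rfl fun j _ => e31 j]
          rw [hZval, Finset.mul_sum]
          refine Finset.sum_congr rfl fun j _ => ?_
          rw [← hyval j]
          ring
        rw [e1, e2, e3]
        ring
      linarith [hplus ▸ hdiff, hminus]
    have hPii : 0 ≤ P i i := hdiag i
    have hPiw : P i i ≤ w i := by have := hfix i; linarith
    have hPκδ : P i i ≤ κ * δ i := le_trans hPiw (hwκδ i)
    have hsq : (P i i) ^ 2 ≤ κ ^ 2 * (δ i) ^ 2 := by
      nlinarith [mul_le_mul hPκδ hPκδ hPii (mul_nonneg hκ0.le (hδ i).le)]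
    have hkey2 : 4 * α * Z ≤ κ ^ 2 := by
      refine le_trans hkey ?_
      rw [div_le_iff₀ (pow_pos (hδ i) 2)]
      linarith
    exact final_combine hκ1 hα0 hα1 hsum1 hkey2

/-- Entrywise bounds for `M = (G − αΛ)⁻¹ G`: the diagonal entries lie in `[0, κ]` and
the weighted off-diagonal row sums satisfy `Σ_{j≠i} M_{ij}²/w_j ≤ κ³`. -/
theorem john_M_entrywise_bounds (d m : ℕ) (hd : 0 < d) (hdm : d ≤ m)
    (A : Matrix (Fin m) (Fin d) ℝ) (b : Fin m → ℝ) (hrank : A.rank = d)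
    (x : Fin d → ℝ) (hx : x ∈ interiorPoly A b)
    (w : Fin m → ℝ) (hw : IsJohnWeight A b x w) :
    (∀ i, ((Gmat w - alphaJ d m • lamMat A b x w)⁻¹ * Gmat w) i i ∈
      Set.Icc (0 : ℝ) (kappaJ d m)) ∧
    (∀ i, ∑ j ∈ Finset.univ.erase i,
        (((Gmat w - alphaJ d m • lamMat A b x w)⁻¹ * Gmat w) i j) ^ 2 / w j ≤
      kappaJ d m ^ 3) := by
  have hwpos := hw.1
  have hfix := hw.2
  have hPsd := johnProj_posSemidef A b x hwpos
  have hsym : ∀ j k, johnProj A b x w j k = johnProj A b x w k j := by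
    intro j k
    have h1 := congrFun (congrFun hPsd.1 j) k
    rw [Matrix.conjTranspose_apply, star_trivial] at h1
    exact h1.symm
  have hquad := fun v => hadSq_quadform_nonneg hPsd v
  have hdiag := fun j => posSemidef_diag_nonneg hPsd j
  have hd0 : (0:ℝ) < d := by exact_mod_cast hd
  have hm0 : (0:ℝ) < m := by exact_mod_cast lt_of_lt_of_le hd hdm
  have hκ1 : 1 ≤ kappaJ d m := by
    unfold kappaJ
    rw [show (1:ℝ) = Real.logb 2 2 from (Real.logb_self_eq_one one_lt_two).symm]
    apply Real.logb_le_logb_of_le one_lt_two (by norm_num)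
    rw [le_div_iff₀ hd0]
    have hdm' : (d:ℝ) ≤ m := by exact_mod_cast hdm
    nlinarith
  have hβ0 : 0 < betaJ d m := by unfold betaJ; positivity
  exact john_M_aux (johnProj A b x w) hsym hquad hdiag w hwpos (alphaJ d m) (betaJ d m)
    (kappaJ d m) hκ1 rfl hβ0 hfix


end PolytopeWalks
end
end

section
/- (Corollary: ℓ₁ and operator-∞ bounds for (G − αΛ)^{-1} G) Let x be in the interior of K and let w be a positive vector satisfying the John fixed-point equations at x. Define G = diag(w), Λ = Σ_{x,w} − P_{x,w}^{(2)}, and κ = (1−α)^{-1} = log₂(2m/d). Then for every i ∈ [m], ‖G (G − αΛ)^{-1} e_i‖₁ ≤ 3 √d · κ^{3/2}, where e_i is the i-th standard basis vector of ℝ^m; consequently the operator ∞-norm satisfies ‖(G − αΛ)^{-1} G‖_∞ ≤ 3 √d · κ^{3/2}. -/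
open Matrix MeasureTheory Real Set
open scoped ENNReal

noncomputable section

namespace PolytopeWalks

lemma dot_symm {m : ℕ} {H : Matrix (Fin m) (Fin m) ℝ} (hH : Hᵀ = H) (x y : Fin m → ℝ) :
    x ⬝ᵥ (H *ᵥ y) = y ⬝ᵥ (H *ᵥ x) := by
  rw [dotProduct_mulVec, dotProduct_comm]
  congr 1
  conv_lhs => rw [← hH]
  exact vecMul_transpose H x

lemma diag_quad {m : ℕ} (f z : Fin m → ℝ) :
    z ⬝ᵥ (Matrix.diagonal f *ᵥ z) = ∑ j, f j * z j ^ 2 := by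
  simp only [dotProduct, Matrix.mulVec_diagonal]
  exact Finset.sum_congr rfl fun j _ => by ring

set_option maxHeartbeats 2000000 in
lemma abstract_bound {m : ℕ} (P : Matrix (Fin m) (Fin m) ℝ) (w : Fin m → ℝ)
    (α β κ : ℝ) (hPsym : Pᵀ = P) (hPidem : P * P = P)
    (hPpsd : ∀ x : Fin m → ℝ, 0 ≤ x ⬝ᵥ (P *ᵥ x))
    (hwfix : ∀ i, w i = P i i + β) (hβ : 0 < β)
    (hα0 : 0 ≤ α) (hκ : 1 ≤ κ) (hακ : 1 - α = 1/κ) (i : Fin m) :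
    (∑ j, |(Matrix.diagonal w *
        (Matrix.diagonal w - α • (Matrix.diagonal (fun k => P k k) - hadSq P))⁻¹) j i| ≤
      κ + Real.sqrt (∑ j, w j) * (κ * Real.sqrt κ)) ∧
    (∑ j, |((Matrix.diagonal w - α • (Matrix.diagonal (fun k => P k k) - hadSq P))⁻¹ *
        Matrix.diagonal w) i j| ≤ κ + Real.sqrt (∑ j, w j) * (κ * Real.sqrt κ)) := by
  have hκ0 : (0:ℝ) < κ := lt_of_lt_of_le one_pos hκ
  have hα1 : α < 1 := by
    have : (0:ℝ) < 1/κ := by positivity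
    linarith
  have hPsym' : ∀ j k, P j k = P k j := fun j k => (congrFun (congrFun hPsym j) k).symm
  have hPP : ∀ j k, ∑ l, P j l * P k l = P j k := by
    intro j k
    have h := congrFun (congrFun hPidem j) k
    simp only [Matrix.mul_apply] at h
    rw [← h]
    exact Finset.sum_congr rfl fun l _ => by rw [hPsym' k l]
  have hPdiag : ∀ j, 0 ≤ P j j := by
    intro j
    have h := hPpsd (Pi.single j 1)
    rw [Matrix.mulVec_single, dotProduct, Finset.sum_eq_single j
      (fun l _ hl => by simp [Pi.single_apply, hl]) (by simp),
      Pi.single_eq_same, one_mul] at h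
    simpa using h
  have hw_pos : ∀ j, 0 < w j := fun j => by
    rw [hwfix j]; have := hPdiag j; linarith
  set H : Matrix (Fin m) (Fin m) ℝ := hadSq P with hH
  have hHapp : ∀ j k, H j k = P j k ^ 2 := fun j k => rfl
  have hHsym : Hᵀ = H := by
    ext j k
    simp only [Matrix.transpose_apply, hHapp, hPsym' j k]
  have hHpsd : ∀ x : Fin m → ℝ, 0 ≤ x ⬝ᵥ (H *ᵥ x) := by
    intro x
    have h1 : x ⬝ᵥ (H *ᵥ x) =
        ∑ l, ((fun j => x j * P j l) ⬝ᵥ (P *ᵥ (fun k => x k * P k l))) := by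
      simp only [dotProduct, mulVec]
      have key : ∀ j, x j * (∑ k, H j k * x k) =
          ∑ l, ∑ k, (x j * P j l) * (P j k * (x k * P k l)) := by
        intro j
        rw [Finset.mul_sum, Finset.sum_comm]
        refine Finset.sum_congr rfl fun k _ => ?_
        have h2 : ∑ l, (x j * P j l) * (P j k * (x k * P k l)) =
            (x j * (P j k * x k)) * ∑ l, P j l * P k l := by
          rw [Finset.mul_sum]
          exact Finset.sum_congr rfl fun l _ => by ring
        rw [h2, hPP j k, hHapp]
        ring
      rw [Finset.sum_congr rfl fun j _ => key j, Finset.sum_comm]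
      exact Finset.sum_congr rfl fun l _ => Finset.sum_congr rfl fun j _ => by
        rw [Finset.mul_sum]
    rw [h1]
    exact Finset.sum_nonneg fun l _ => hPpsd _
  set B : Matrix (Fin m) (Fin m) ℝ :=
    Matrix.diagonal w - α • (Matrix.diagonal (fun k => P k k) - H) with hBdef
  set c : Fin m → ℝ := fun j => w j - α * P j j with hcdef
  have hc_eq : ∀ j, c j = (1 - α) * w j + α * β := by
    intro j
    have := hwfix j
    simp only [hcdef]
    nlinarith [this]
  have hc_pos : ∀ j, 0 < c j := by
    intro j
    rw [hc_eq j]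
    have h1 : 0 < (1 - α) * w j := mul_pos (by linarith) (hw_pos j)
    nlinarith [hβ, hα0]
  have hBsplit : B = Matrix.diagonal c + α • H := by
    ext j k
    by_cases h : j = k
    · subst h
      simp [hBdef, hcdef, Matrix.diagonal_apply, Matrix.sub_apply, Matrix.add_apply,
        Matrix.smul_apply]
      ring
    · simp [hBdef, Matrix.diagonal_apply, h, Matrix.sub_apply, Matrix.add_apply,
        Matrix.smul_apply]
  have hBquad : ∀ z : Fin m → ℝ, z ⬝ᵥ (B *ᵥ z) =
      (∑ j, c j * z j ^ 2) + α * (z ⬝ᵥ (H *ᵥ z)) := by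
    intro z
    rw [hBsplit, Matrix.add_mulVec, dotProduct_add, Matrix.smul_mulVec,
      dotProduct_smul, diag_quad, smul_eq_mul]
  have hBpos : ∀ z : Fin m → ℝ, z ≠ 0 → 0 < z ⬝ᵥ (B *ᵥ z) := by
    intro z hz
    rw [hBquad]
    have h1 : 0 < ∑ j, c j * z j ^ 2 := by
      obtain ⟨j, hj⟩ : ∃ j, z j ≠ 0 := by
        by_contra h; push_neg at h; exact hz (funext h)
      refine Finset.sum_pos' (fun k _ => by have := (hc_pos k).le; positivity)
        ⟨j, Finset.mem_univ j, mul_pos (hc_pos j) (pow_two_pos_of_ne_zero hj)⟩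
    nlinarith [hHpsd z, hα0]
  have hBdetu : IsUnit B.det := by
    rw [isUnit_iff_ne_zero]
    intro h0
    obtain ⟨v, hv0, hv⟩ := (Matrix.exists_mulVec_eq_zero_iff).mpr h0
    have := hBpos v hv0
    rw [hv, dotProduct_zero] at this
    exact lt_irrefl 0 this
  have hBsymm : Bᵀ = B := by
    rw [hBdef, Matrix.transpose_sub, Matrix.transpose_smul, Matrix.transpose_sub,
      Matrix.diagonal_transpose, Matrix.diagonal_transpose, hHsym]
  have hBinvsym : (B⁻¹)ᵀ = B⁻¹ := by rw [Matrix.transpose_nonsing_inv, hBsymm]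
  have hBinvB : B⁻¹ * B = 1 := Matrix.nonsing_inv_mul B hBdetu
  have hBBinv : B * B⁻¹ = 1 := Matrix.mul_nonsing_inv B hBdetu
  set v : Fin m → ℝ := B⁻¹ *ᵥ Pi.single i 1 with hvdef
  set u : Fin m → ℝ := H *ᵥ Pi.single i 1 with hudef
  set z : Fin m → ℝ := B⁻¹ *ᵥ u with hzdef
  have hvj : ∀ j, B⁻¹ j i = v j := by
    intro j; simp [hvdef, Matrix.mulVec_single]
  have huj : ∀ j, u j = P j i ^ 2 := by
    intro j; simp [hudef, Matrix.mulVec_single, hHapp]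
  have hBz : B *ᵥ z = u := by
    rw [hzdef, Matrix.mulVec_mulVec, hBBinv, Matrix.one_mulVec]
  have hBe : B *ᵥ Pi.single i 1 - α • u = c i • (Pi.single i 1 : Fin m → ℝ) := by
    funext j
    have hB : (B *ᵥ Pi.single i 1) j = B j i := by simp [Matrix.mulVec_single]
    have hBji : B j i = Matrix.diagonal c j i + α * H j i := by
      rw [hBsplit]; simp [Matrix.add_apply, Matrix.smul_apply, smul_eq_mul]
    have huj' : u j = H j i := by simp [hudef, Matrix.mulVec_single]
    simp only [Pi.sub_apply, Pi.smul_apply, smul_eq_mul, hB, hBji, huj']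
    rw [Matrix.diagonal_apply, Pi.single_apply]
    by_cases h : j = i
    · subst h; simp
    · simp [h]
  have hkey : c i • v = Pi.single i 1 - α • z := by
    have h1 : Pi.single i 1 - α • z = B⁻¹ *ᵥ (B *ᵥ Pi.single i 1 - α • u) := by
      rw [Matrix.mulVec_sub, Matrix.mulVec_mulVec, hBinvB, Matrix.one_mulVec,
        Matrix.mulVec_smul]
    rw [h1, hBe, Matrix.mulVec_smul]
  have hvformula : ∀ j, v j = ((Pi.single i 1 : Fin m → ℝ) j - α * z j) / c i := by
    intro j
    have h := congrFun hkey j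
    simp only [Pi.smul_apply, smul_eq_mul, Pi.sub_apply] at h
    rw [eq_div_iff (ne_of_gt (hc_pos i))]
    linear_combination h
  have hq_eq : z ⬝ᵥ (B *ᵥ z) = u ⬝ᵥ z := by rw [hBz, dotProduct_comm]
  set q : ℝ := u ⬝ᵥ z with hqdef
  have hHz : 0 ≤ z ⬝ᵥ (H *ᵥ z) := hHpsd z
  have hczq : 0 ≤ ∑ j, c j * z j ^ 2 :=
    Finset.sum_nonneg fun j _ => by have := (hc_pos j).le; positivity
  have hq_split : q = (∑ j, c j * z j ^ 2) + α * (z ⬝ᵥ (H *ᵥ z)) := by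
    rw [← hq_eq]; exact hBquad z
  have hq0 : 0 ≤ q := by rw [hq_split]; nlinarith
  have hαq : α * q ≤ P i i ^ 2 := by
    have hcomp := hHpsd (α • z - Pi.single i 1)
    have hexp : (α • z - Pi.single i 1) ⬝ᵥ (H *ᵥ (α • z - Pi.single i 1)) =
        α ^ 2 * (z ⬝ᵥ (H *ᵥ z)) - 2 * α * q + P i i ^ 2 := by
      rw [Matrix.mulVec_sub, dotProduct_sub, sub_dotProduct, sub_dotProduct,
        Matrix.mulVec_smul, dotProduct_smul, dotProduct_smul, smul_dotProduct,
        smul_dotProduct]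
      have h1 : Pi.single i 1 ⬝ᵥ (H *ᵥ z) = q := by
        rw [dot_symm hHsym, ← hudef, hqdef, dotProduct_comm]
      have h2 : (z ⬝ᵥ (H *ᵥ Pi.single i 1)) = q := by
        rw [← hudef, hqdef, dotProduct_comm]
      have h3 : Pi.single i 1 ⬝ᵥ (H *ᵥ Pi.single i 1) = P i i ^ 2 := by
        rw [← hudef, single_dotProduct, one_mul, huj i]
      rw [h1, h2, h3]
      simp only [smul_eq_mul]
      ring
    rw [hexp] at hcomp
    have hα2 : α ^ 2 * (z ⬝ᵥ (H *ᵥ z)) ≤ α * q := by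
      have h5 : α * (z ⬝ᵥ (H *ᵥ z)) ≤ q := by rw [hq_split]; linarith
      nlinarith [hα0]
    linarith
  have hwc : ∀ j, w j ≤ κ * c j := by
    intro j
    rw [hc_eq j]
    have hκα : κ * (1 - α) = 1 := by
      rw [hακ]; field_simp
    nlinarith [hw_pos j, hβ, hα0, hκ0]
  have hzG : ∑ j, w j * z j ^ 2 ≤ κ * q := by
    calc ∑ j, w j * z j ^ 2 ≤ ∑ j, κ * c j * z j ^ 2 := by
          refine Finset.sum_le_sum fun j _ => ?_
          nlinarith [hwc j, sq_nonneg (z j)]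
      _ = κ * ∑ j, c j * z j ^ 2 := by
          rw [Finset.mul_sum]; exact Finset.sum_congr rfl fun j _ => by ring
      _ ≤ κ * q := by
          rw [hq_split]
          nlinarith [mul_nonneg (mul_nonneg hκ0.le hα0) hHz]
  set T : ℝ := ∑ j, w j with hTdef
  have hT0 : 0 ≤ T := Finset.sum_nonneg fun j _ => (hw_pos j).le
  set S : ℝ := ∑ j, w j * |z j| with hSdef
  have hS0 : 0 ≤ S := Finset.sum_nonneg fun j _ => by have := (hw_pos j).le; positivity
  have hS2 : S ^ 2 ≤ T * ∑ j, w j * z j ^ 2 := by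
    have hcs := Finset.sum_mul_sq_le_sq_mul_sq Finset.univ
      (fun j => Real.sqrt (w j)) (fun j => Real.sqrt (w j) * |z j|)
    have e1 : ∑ j, Real.sqrt (w j) * (Real.sqrt (w j) * |z j|) = S := by
      rw [hSdef]
      refine Finset.sum_congr rfl fun j _ => ?_
      rw [← mul_assoc, Real.mul_self_sqrt (hw_pos j).le]
    have e2 : ∑ j, Real.sqrt (w j) ^ 2 = T := by
      rw [hTdef]
      exact Finset.sum_congr rfl fun j _ => Real.sq_sqrt (hw_pos j).le
    have e3 : ∑ j, (Real.sqrt (w j) * |z j|) ^ 2 = ∑ j, w j * z j ^ 2 := by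
      refine Finset.sum_congr rfl fun j _ => ?_
      rw [mul_pow, Real.sq_sqrt (hw_pos j).le, sq_abs]
    rw [e1, e2, e3] at hcs
    exact hcs
  have hPii : 0 ≤ P i i := hPdiag i
  have hαS : α * S ≤ Real.sqrt T * Real.sqrt κ * P i i := by
    have h1 : (α * S) ^ 2 ≤ T * κ * (α * (α * q)) := by
      have h3 : S ^ 2 ≤ T * (κ * q) :=
        le_trans hS2 (mul_le_mul_of_nonneg_left hzG hT0)
      nlinarith [sq_nonneg α, hα0, hS0, hT0, hκ0.le, hq0]
    have h5 : α * (α * q) ≤ P i i ^ 2 := by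
      have h6 : α * (α * q) ≤ 1 * (α * q) :=
        mul_le_mul_of_nonneg_right hα1.le (by nlinarith [hα0, hq0])
      nlinarith [hαq]
    have h7 : (α * S) ^ 2 ≤ (Real.sqrt T * Real.sqrt κ * P i i) ^ 2 := by
      have he : (Real.sqrt T * Real.sqrt κ * P i i) ^ 2 = T * κ * P i i ^ 2 := by
        rw [mul_pow, mul_pow, Real.sq_sqrt hT0, Real.sq_sqrt hκ0.le]
      rw [he]
      have := mul_le_mul_of_nonneg_left h5 (mul_nonneg hT0 hκ0.le)
      linarith
    nlinarith [h7, mul_nonneg hα0 hS0, mul_nonneg (mul_nonneg (Real.sqrt_nonneg T) (Real.sqrt_nonneg κ)) hPii]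
  -- assemble
  have hsingle : ∑ j, w j * (Pi.single i 1 : Fin m → ℝ) j = w i := by
    rw [Finset.sum_eq_single i (fun j _ hj => by simp [Pi.single_apply, hj]) (by simp)]
    simp
  have hsum_core : ∑ j, w j * |v j| ≤ κ + Real.sqrt T * (κ * Real.sqrt κ) := by
    have hstep : ∑ j, w j * |v j| ≤ (w i + α * S) / c i := by
      have h1 : ∀ j, w j * |v j| = (w j * |(Pi.single i 1 : Fin m → ℝ) j - α * z j|) / c i := by
        intro j
        rw [hvformula j, abs_div, abs_of_pos (hc_pos i), mul_div_assoc]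
      calc ∑ j, w j * |v j| = (∑ j, w j * |(Pi.single i 1 : Fin m → ℝ) j - α * z j|) / c i := by
            rw [Finset.sum_div]; exact Finset.sum_congr rfl fun j _ => h1 j
        _ ≤ (w i + α * S) / c i := by
            rw [div_le_div_iff_of_pos_right (hc_pos i)]
            calc ∑ j, w j * |(Pi.single i 1 : Fin m → ℝ) j - α * z j|
                ≤ ∑ j, (w j * (Pi.single i 1 : Fin m → ℝ) j + α * (w j * |z j|)) := by
                  refine Finset.sum_le_sum fun j _ => ?_
                  have htri : |(Pi.single i 1 : Fin m → ℝ) j - α * z j| ≤ (Pi.single i 1 : Fin m → ℝ) j + α * |z j| := by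
                    have ht := abs_sub ((Pi.single i 1 : Fin m → ℝ) j) (α * z j)
                    have h0 : |(Pi.single i 1 : Fin m → ℝ) j| = (Pi.single i 1 : Fin m → ℝ) j := by
                      rw [Pi.single_apply]; split <;> simp
                    rw [h0, abs_mul, abs_of_nonneg hα0] at ht
                    exact ht
                  nlinarith [hw_pos j, abs_nonneg (z j)]
              _ = w i + α * S := by
                  rw [Finset.sum_add_distrib, hsingle, ← Finset.mul_sum, hSdef]
    have hdiv1 : w i / c i ≤ κ := by
      rw [div_le_iff₀ (hc_pos i)]
      linarith [hwc i]
    have hdiv2 : α * S / c i ≤ Real.sqrt T * Real.sqrt κ * κ := by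
      have hPw : P i i ≤ w i := by rw [hwfix i]; linarith
      have h2 : α * S / c i ≤ (Real.sqrt T * Real.sqrt κ * P i i) / c i := by
        exact (div_le_div_iff_of_pos_right (hc_pos i)).mpr hαS
      have h3 : (Real.sqrt T * Real.sqrt κ * P i i) / c i ≤ Real.sqrt T * Real.sqrt κ * κ := by
        rw [div_le_iff₀ (hc_pos i)]
        have h4 : P i i ≤ κ * c i := le_trans hPw (hwc i)
        have h5 := mul_le_mul_of_nonneg_left h4
          (mul_nonneg (Real.sqrt_nonneg T) (Real.sqrt_nonneg κ))
        nlinarith [h5]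
      linarith
    calc ∑ j, w j * |v j| ≤ (w i + α * S) / c i := hstep
      _ = w i / c i + α * S / c i := by rw [add_div]
      _ ≤ κ + Real.sqrt T * Real.sqrt κ * κ := by linarith
      _ = κ + Real.sqrt T * (κ * Real.sqrt κ) := by ring
  constructor
  · have e : ∑ j, |(Matrix.diagonal w * B⁻¹) j i| = ∑ j, w j * |v j| := by
      refine Finset.sum_congr rfl fun j _ => ?_
      rw [Matrix.diagonal_mul, hvj j, abs_mul, abs_of_pos (hw_pos j)]
    rw [e]; exact hsum_core
  · have e : ∑ j, |(B⁻¹ * Matrix.diagonal w) i j| = ∑ j, w j * |v j| := by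
      refine Finset.sum_congr rfl fun j _ => ?_
      have hsym : B⁻¹ i j = B⁻¹ j i := (congrFun (congrFun hBinvsym i) j).symm
      rw [Matrix.mul_diagonal, hsym, hvj j, abs_mul, abs_of_pos (hw_pos j), mul_comm]
    rw [e]; exact hsum_core


lemma johnProj_facts_s18 {d m : ℕ} (A : Matrix (Fin m) (Fin d) ℝ) (b : Fin m → ℝ)
    (x : Fin d → ℝ) (w : Fin m → ℝ)
    (hw : ∀ i, 0 < w i)
    (hinj : ∀ y : Fin d → ℝ, Amat A b x *ᵥ y = 0 → y = 0) :
    (johnProj A b x w)ᵀ = johnProj A b x w ∧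
    johnProj A b x w * johnProj A b x w = johnProj A b x w ∧
    (∀ v : Fin m → ℝ, 0 ≤ v ⬝ᵥ (johnProj A b x w *ᵥ v)) ∧
    ∑ j, johnProj A b x w j j = (d : ℝ) := by
  set M : Matrix (Fin m) (Fin d) ℝ := Amat A b x with hM
  set W2 : Matrix (Fin m) (Fin m) ℝ :=
    Matrix.diagonal (fun i => w i ^ (alphaJ d m / 2)) with hW2
  set N : Matrix (Fin m) (Fin d) ℝ := W2 * M with hN
  set Q : Matrix (Fin d) (Fin d) ℝ :=
    Mᵀ * Matrix.diagonal (fun i => w i ^ alphaJ d m) * M with hQ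
  have hW2W2 : W2 * W2 = Matrix.diagonal (fun i => w i ^ alphaJ d m) := by
    have he : (fun i => w i ^ (alphaJ d m / 2) * w i ^ (alphaJ d m / 2)) =
        fun i => w i ^ alphaJ d m := by
      funext i
      rw [← Real.rpow_add (hw i)]
      norm_num
    rw [hW2, Matrix.diagonal_mul_diagonal, he]
  have hNt : Nᵀ = Mᵀ * W2 := by
    rw [hN, Matrix.transpose_mul, hW2, Matrix.diagonal_transpose]
  have hQN : Q = Nᵀ * N := by
    rw [hNt, hN, hQ, ← hW2W2]
    rw [Matrix.mul_assoc, Matrix.mul_assoc, Matrix.mul_assoc]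
  have hPdef : johnProj A b x w = N * Q⁻¹ * Nᵀ := by
    rw [johnProj, hNt, hN, ← hM, ← hW2, ← hQ]
    simp only [Matrix.mul_assoc]
  -- quadratic form of Q
  have hQform : ∀ y : Fin d → ℝ, y ⬝ᵥ (Q *ᵥ y) = (N *ᵥ y) ⬝ᵥ (N *ᵥ y) := by
    intro y
    rw [hQN, ← Matrix.mulVec_mulVec, dotProduct_mulVec, vecMul_transpose]
  have hNinj : ∀ y : Fin d → ℝ, N *ᵥ y = 0 → y = 0 := by
    intro y hy
    apply hinj
    have h1 : N *ᵥ y = W2 *ᵥ (M *ᵥ y) := by rw [hN, ← Matrix.mulVec_mulVec]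
    funext i
    have h2 := congrFun hy i
    rw [h1] at h2
    rw [Matrix.mulVec_diagonal] at h2
    have h3 : w i ^ (alphaJ d m / 2) ≠ 0 := ne_of_gt (Real.rpow_pos_of_pos (hw i) _)
    have := mul_eq_zero.mp h2
    simp only [Pi.zero_apply]
    tauto
  have hQdet : IsUnit Q.det := by
    rw [isUnit_iff_ne_zero]
    intro h0
    obtain ⟨y, hy0, hy⟩ := (Matrix.exists_mulVec_eq_zero_iff).mpr h0
    have h1 : y ⬝ᵥ (Q *ᵥ y) = 0 := by rw [hy, dotProduct_zero]
    rw [hQform y] at h1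
    have h2 : N *ᵥ y = 0 := dotProduct_self_eq_zero.mp h1
    exact hy0 (hNinj y h2)
  have hQQinv : Q * Q⁻¹ = 1 := Matrix.mul_nonsing_inv Q hQdet
  have hQinvQ : Q⁻¹ * Q = 1 := Matrix.nonsing_inv_mul Q hQdet
  have hQsym : Qᵀ = Q := by
    rw [hQN, Matrix.transpose_mul, Matrix.transpose_transpose]
  have hQinvsym : (Q⁻¹)ᵀ = Q⁻¹ := by rw [Matrix.transpose_nonsing_inv, hQsym]
  refine ⟨?_, ?_, ?_, ?_⟩
  · rw [hPdef]
    simp only [Matrix.transpose_mul, Matrix.transpose_transpose, hQinvsym, Matrix.mul_assoc]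
  · rw [hPdef]
    calc N * Q⁻¹ * Nᵀ * (N * Q⁻¹ * Nᵀ) = N * Q⁻¹ * (Nᵀ * N) * (Q⁻¹ * Nᵀ) := by
          rw [Matrix.mul_assoc (N * Q⁻¹) Nᵀ (N * Q⁻¹ * Nᵀ), Matrix.mul_assoc N Q⁻¹ Nᵀ,
            ← Matrix.mul_assoc Nᵀ N (Q⁻¹ * Nᵀ), ← Matrix.mul_assoc (N * Q⁻¹) (Nᵀ * N) (Q⁻¹ * Nᵀ)]
      _ = N * (Q⁻¹ * Q) * (Q⁻¹ * Nᵀ) := by rw [← hQN, Matrix.mul_assoc N Q⁻¹ Q]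
      _ = N * Q⁻¹ * Nᵀ := by
          rw [hQinvQ, Matrix.mul_one, ← Matrix.mul_assoc N Q⁻¹ Nᵀ]
  · intro v
    rw [hPdef]
    have h1 : (N * Q⁻¹ * Nᵀ) *ᵥ v = N *ᵥ (Q⁻¹ *ᵥ (Nᵀ *ᵥ v)) := by
      rw [Matrix.mulVec_mulVec, Matrix.mulVec_mulVec]
    rw [h1, dotProduct_mulVec v N _, ← Matrix.mulVec_transpose]
    set t : Fin d → ℝ := Nᵀ *ᵥ v with ht
    have h2 : Q *ᵥ (Q⁻¹ *ᵥ t) = t := by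
      rw [Matrix.mulVec_mulVec, hQQinv, Matrix.one_mulVec]
    have h3 : t ⬝ᵥ (Q⁻¹ *ᵥ t) = (Q⁻¹ *ᵥ t) ⬝ᵥ (Q *ᵥ (Q⁻¹ *ᵥ t)) := by
      rw [h2, dotProduct_comm]
    rw [h3, hQform]
    exact Finset.sum_nonneg fun k _ => mul_self_nonneg _
  · have h1 : ∑ j, johnProj A b x w j j = (johnProj A b x w).trace := rfl
    rw [h1, hPdef, Matrix.trace_mul_comm (N * Q⁻¹) Nᵀ, ← Matrix.mul_assoc, ← hQN,
      hQQinv, Matrix.trace_one]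
    simp


set_option maxHeartbeats 1000000 in
/-- ℓ₁- and operator-∞ bounds for `(G − αΛ)⁻¹G`: for every `i`,
`‖G(G−αΛ)⁻¹ e_i‖₁ ≤ 3√d · κ^{3/2}`, and consequently
`‖(G−αΛ)⁻¹G‖_∞ = max_i Σ_j |((G−αΛ)⁻¹G)_{ij}| ≤ 3√d · κ^{3/2}`. -/
theorem john_M_l1_linfty_bounds (d m : ℕ) (hd : 0 < d) (hdm : d ≤ m)
    (A : Matrix (Fin m) (Fin d) ℝ) (b : Fin m → ℝ) (hrank : A.rank = d)
    (x : Fin d → ℝ) (hx : x ∈ interiorPoly A b)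
    (w : Fin m → ℝ) (hw : IsJohnWeight A b x w) :
    (∀ i, ∑ j, |(Gmat w * (Gmat w - alphaJ d m • lamMat A b x w)⁻¹) j i| ≤
      3 * Real.sqrt d * kappaJ d m ^ ((3 : ℝ) / 2)) ∧
    (∀ i, ∑ j, |((Gmat w - alphaJ d m • lamMat A b x w)⁻¹ * Gmat w) i j| ≤
      3 * Real.sqrt d * kappaJ d m ^ ((3 : ℝ) / 2)) := by
  obtain ⟨hwpos, hwfix⟩ := hw
  have hs : ∀ i, 0 < slack A b x i := hx
  have hm : 0 < m := lt_of_lt_of_le hd hdm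
  have hd0 : (0:ℝ) < d := by exact_mod_cast hd
  have hm0 : (0:ℝ) < m := by exact_mod_cast hm
  have hAinj : ∀ y : Fin d → ℝ, A *ᵥ y = 0 → y = 0 := by
    intro y hy
    have h1 := LinearMap.finrank_range_add_finrank_ker A.mulVecLin
    rw [Matrix.rank] at hrank
    rw [hrank, Module.finrank_pi] at h1
    simp only [Fintype.card_fin] at h1
    have hker : Module.finrank ℝ (LinearMap.ker A.mulVecLin) = 0 := by omega
    rw [Submodule.finrank_eq_zero] at hker
    have hmem : y ∈ LinearMap.ker A.mulVecLin := by
      simp [LinearMap.mem_ker, Matrix.mulVecLin_apply, hy]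
    rw [hker] at hmem
    simpa using hmem
  have hinj : ∀ y : Fin d → ℝ, Amat A b x *ᵥ y = 0 → y = 0 := by
    intro y hy
    apply hAinj
    funext i
    have h2 := congrFun hy i
    have h3 : (Amat A b x *ᵥ y) i = (∑ j, A i j * y j) / slack A b x i := by
      simp only [Amat, Matrix.mulVec, dotProduct, Matrix.of_apply]
      rw [Finset.sum_div]
      exact Finset.sum_congr rfl fun j _ => by ring
    rw [h3] at h2
    have h4 : (∑ j, A i j * y j) = 0 := by
      rcases div_eq_zero_iff.mp h2 with h | h
      · exact h
      · exact absurd h (ne_of_gt (hs i))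
    simpa [Matrix.mulVec, dotProduct] using h4
  obtain ⟨hPsym, hPidem, hPpsd, htr⟩ := johnProj_facts_s18 A b x w hwpos hinj
  set κ : ℝ := kappaJ d m with hκdef
  have hratio : (2:ℝ) ≤ (2 * m : ℝ) / d := by
    rw [le_div_iff₀ hd0]
    have hcast : (d:ℝ) ≤ m := by exact_mod_cast hdm
    nlinarith
  have hκ1 : 1 ≤ κ := by
    rw [hκdef, kappaJ,
      show (1:ℝ) = Real.logb 2 2 from (Real.logb_self_eq_one (by norm_num)).symm]
    exact Real.logb_le_logb_of_le (by norm_num) (by norm_num) hratio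
  have hκ0 : (0:ℝ) < κ := by linarith
  have hακ : 1 - alphaJ d m = 1 / κ := by
    rw [alphaJ, hκdef, kappaJ]; ring
  have hα0 : 0 ≤ alphaJ d m := by
    have h1 : 1/κ ≤ 1 := by rw [div_le_one hκ0]; exact hκ1
    linarith [hακ]
  have hβ : 0 < betaJ d m := by rw [betaJ]; positivity
  have hT : ∑ j, w j = 3 * (d:ℝ) / 2 := by
    have h1 : ∑ j, w j = ∑ j, (johnProj A b x w j j + betaJ d m) :=
      Finset.sum_congr rfl fun j _ => hwfix j
    rw [h1, Finset.sum_add_distrib, htr, Finset.sum_const, Finset.card_univ,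
      Fintype.card_fin, nsmul_eq_mul, betaJ]
    have h2 : (m:ℝ) * ((d:ℝ)/(2*m)) = d/2 := by
      field_simp
    rw [h2]
    ring
  have key := fun i => abstract_bound (johnProj A b x w) w (alphaJ d m) (betaJ d m) κ
    hPsym hPidem hPpsd hwfix hβ hα0 hκ1 hακ i
  have hbound : κ + Real.sqrt (∑ j, w j) * (κ * Real.sqrt κ) ≤
      3 * Real.sqrt d * κ ^ ((3:ℝ)/2) := by
    have hrpow : κ ^ ((3:ℝ)/2) = κ * Real.sqrt κ := by
      rw [show ((3:ℝ)/2) = 1 + 1/2 by norm_num, Real.rpow_add hκ0, Real.rpow_one,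
        ← Real.sqrt_eq_rpow]
    rw [hrpow, hT]
    have hd1 : (1:ℝ) ≤ Real.sqrt d := by
      rw [show (1:ℝ) = Real.sqrt 1 from Real.sqrt_one.symm]
      exact Real.sqrt_le_sqrt (by exact_mod_cast hd)
    have hκs1 : (1:ℝ) ≤ Real.sqrt κ := by
      rw [show (1:ℝ) = Real.sqrt 1 from Real.sqrt_one.symm]
      exact Real.sqrt_le_sqrt hκ1
    have h32 : Real.sqrt (3 * (d:ℝ) / 2) ≤ 2 * Real.sqrt d := by
      have he : 3 * (d:ℝ)/2 = (3/2) * d := by ring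
      rw [he, Real.sqrt_mul (by norm_num : (0:ℝ) ≤ 3/2)]
      have hs32 : Real.sqrt (3/2 : ℝ) ≤ 2 := by
        nlinarith [Real.sq_sqrt (show (0:ℝ) ≤ 3/2 by norm_num), Real.sqrt_nonneg (3/2:ℝ)]
      nlinarith [Real.sqrt_nonneg (d:ℝ)]
    have ha : 1 ≤ Real.sqrt d * Real.sqrt κ := by nlinarith [hd1, hκs1]
    have h1 : κ ≤ Real.sqrt d * (κ * Real.sqrt κ) := by
      nlinarith [mul_le_mul_of_nonneg_left ha hκ0.le]
    have h2 : Real.sqrt (3*(d:ℝ)/2) * (κ * Real.sqrt κ) ≤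
        2 * Real.sqrt d * (κ * Real.sqrt κ) := by
      apply mul_le_mul_of_nonneg_right h32
      positivity
    nlinarith [h1, h2]
  exact ⟨fun i => le_trans (key i).1 hbound, fun i => le_trans (key i).2 hbound⟩

end PolytopeWalks
end
end
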